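/- arXiv:1710.10867 — 3 statements merged into one kernel-verified Lean document; each statement's English description precedes it below -/
import Mathlib

section
/- Let n ≥ 3 and let K = K(a,b) be a K-generator with positive parameters. If R and S are invertible (n−1)-nonnegative n×n real matrices with R·S = K, then R is a diagonal matrix or S is a diagonal matrix. -/
open Matrix

/-- A square real matrix is `k`-nonnegative if every minor of order at most `k`
(indexed by strictly increasing row and column selections) is nonnegative. -/
def IsKNonneg {n : ℕ} (k : ℕ) (X : Matrix (Fin n) (Fin n) ℝ) : Prop :=
  ∀ m : ℕ, m ≤ k → ∀ I J : Fin m → Fin n, StrictMono I → StrictMono J →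
    0 ≤ (X.submatrix I J).det

/-- The quantity `X = Σ_{k=1}^{n-2} (∏_{ℓ=2}^{k} b_{ℓ-1})(∏_{ℓ=k+1}^{n-2} a_ℓ)`
(written 0-based: the 1-based `a_j`, `b_j` are `a (j-1)`, `b (j-1)` here). -/
noncomputable def KgenX (n : ℕ) (a b : ℕ → ℝ) : ℝ :=
  ∑ k ∈ Finset.range (n - 2),
    (∏ m ∈ Finset.range k, b m) * ∏ m ∈ Finset.Ico (k + 1) (n - 2), a m

/-- The quantity `Y = b_1 ⋯ b_{n-2}` (0-based: `b 0 ⋯ b (n-3)`). -/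
noncomputable def KgenY (n : ℕ) (b : ℕ → ℝ) : ℝ := ∏ m ∈ Finset.range (n - 2), b m

/-- The `K`-generator `K(a, b)` (0-based indexing of the parameters). -/
noncomputable def Kgen (n : ℕ) (a b : ℕ → ℝ) : Matrix (Fin n) (Fin n) ℝ :=
  fun p q =>
    if (p : ℕ) + 1 = n ∧ (q : ℕ) + 1 = n then b (n - 2) * KgenX n a b
    else if (p : ℕ) + 2 = n ∧ (q : ℕ) + 2 = n then b (n - 3)
    else if (p : ℕ) = (q : ℕ) ∧ (p : ℕ) = 0 then a 0
    else if (p : ℕ) = (q : ℕ) then a p + b ((p : ℕ) - 1)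
    else if (p : ℕ) + 2 = n ∧ (q : ℕ) + 1 = n then b (n - 2) * KgenY n b
    else if (q : ℕ) = (p : ℕ) + 1 then a p * b p
    else if (p : ℕ) = (q : ℕ) + 1 then 1
    else 0




namespace KgenAux

lemma entry_nonneg {n k : ℕ} {X : Matrix (Fin n) (Fin n) ℝ} (hX : IsKNonneg k X)
    (hk : 1 ≤ k) (p q : Fin n) : 0 ≤ X p q := by
  have h := hX 1 hk (fun _ => p) (fun _ => q)
    (fun x y h => absurd (Subsingleton.elim x y) h.ne)
    (fun x y h => absurd (Subsingleton.elim x y) h.ne)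
  simpa [Matrix.det_fin_one] using h

lemma strictMono_pair {n : ℕ} {p p' : Fin n} (h : p < p') :
    StrictMono (fun t : Fin 2 => if (t : ℕ) = 0 then p else p') := by
  intro x y hxy
  have hx := x.isLt
  have hy := y.isLt
  have hlt : (x : ℕ) < (y : ℕ) := hxy
  have h1 : (x : ℕ) = 0 := by omega
  have h2 : (y : ℕ) = 1 := by omega
  simp only [h1, h2, if_pos rfl, if_neg (by omega : (1:ℕ) ≠ 0)]
  exact h

lemma minor2 {n k : ℕ} {X : Matrix (Fin n) (Fin n) ℝ} (hX : IsKNonneg k X)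
    (hk : 2 ≤ k) {p p' q q' : Fin n} (hp : p < p') (hq : q < q') :
    0 ≤ X p q * X p' q' - X p q' * X p' q := by
  have h := hX 2 hk _ _ (strictMono_pair hp) (strictMono_pair hq)
  rw [Matrix.det_fin_two] at h
  simpa using h

/-- If rows `≤ i` vanish on columns `≥ i`, the determinant is zero. -/
lemma det_eq_zero_of_block {n : ℕ} (M : Matrix (Fin n) (Fin n) ℝ) (i : Fin n)
    (h : ∀ p q : Fin n, p ≤ i → i ≤ q → M p q = 0) : M.det = 0 := by
  rw [Matrix.det_apply]
  refine Finset.sum_eq_zero fun σ _ => ?_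
  obtain ⟨x, hx1, hx2⟩ : ∃ x : Fin n, i ≤ x ∧ σ x ≤ i := by
    by_contra hc
    push_neg at hc
    set s : Finset (Fin n) := Finset.univ.filter (fun x => i ≤ x) with hs
    set t : Finset (Fin n) := Finset.univ.filter (fun x => i < x) with ht
    have hmaps : ∀ x ∈ s, σ x ∈ t := by
      intro x hx
      simp only [hs, Finset.mem_filter, Finset.mem_univ, true_and] at hx
      simp only [ht, Finset.mem_filter, Finset.mem_univ, true_and]
      exact hc x hx
    have hcard := Finset.card_le_card_of_injOn σ hmaps (σ.injective.injOn)
    have hsub : t ⊂ s := by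
      constructor
      · intro x hx
        simp only [ht, Finset.mem_filter, Finset.mem_univ, true_and] at hx
        simp only [hs, Finset.mem_filter, Finset.mem_univ, true_and]
        exact le_of_lt hx
      · intro hss
        have hi : i ∈ s := by simp [hs]
        have := hss hi
        simp [ht] at this
    have := Finset.card_lt_card hsub
    omega
  have hz : M (σ x) x = 0 := h _ _ hx2 hx1
  have hp : (∏ j : Fin n, M (σ j) j) = 0 := Finset.prod_eq_zero (Finset.mem_univ x) hz
  rw [hp, smul_zero]

/-- A `2`-nonnegative (entrywise and `2 × 2` minors) matrix with nonzero determinant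
has positive diagonal. -/
lemma diag_pos {n : ℕ} {X : Matrix (Fin n) (Fin n) ℝ}
    (h1 : ∀ p q, 0 ≤ X p q)
    (h2 : ∀ p p' q q' : Fin n, p < p' → q < q' → 0 ≤ X p q * X p' q' - X p q' * X p' q)
    (hdet : X.det ≠ 0) : ∀ i, 0 < X i i := by
  intro i
  rcases lt_or_eq_of_le (h1 i i) with h | h
  · exact h
  exfalso
  have hii : X i i = 0 := h.symm
  -- shadow lemmas
  have sh1 : ∀ p q : Fin n, p < i → q < i → X p i * X i q = 0 := by
    intro p q hp hq
    have := h2 p i q i hp hq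
    rw [hii] at this
    have hn := mul_nonneg (h1 p i) (h1 i q)
    nlinarith [h1 p q]
  have sh2 : ∀ p q : Fin n, i < p → i < q → X i q * X p i = 0 := by
    intro p q hp hq
    have := h2 i p i q hp hq
    rw [hii] at this
    have hn := mul_nonneg (h1 i q) (h1 p i)
    nlinarith [h1 p q]
  by_cases hA : ∃ q, q < i ∧ 0 < X i q
  · -- A holds, so ¬B
    obtain ⟨q0, hq0, hq0p⟩ := hA
    have hB : ∀ p, p < i → X p i = 0 := by
      intro p hp
      have := sh1 p q0 hp hq0
      rcases mul_eq_zero.mp this with h' | h'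
      · exact h'
      · exact absurd h' (ne_of_gt hq0p)
    by_cases hD : ∃ p, i < p ∧ 0 < X p i
    · -- case A ∧ D : rows ≤ i vanish on cols ≥ i
      obtain ⟨p0, hp0, hp0p⟩ := hD
      have hCz : ∀ q, i < q → X i q = 0 := by
        intro q hq
        have := sh2 p0 q hp0 hq
        rcases mul_eq_zero.mp this with h' | h'
        · exact h'
        · exact absurd h' (ne_of_gt hp0p)
      apply hdet
      apply det_eq_zero_of_block X i
      intro p q hp hq
      rcases lt_or_eq_of_le hp with hp' | hp'
      · rcases lt_or_eq_of_le hq with hq' | hq'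
        · -- p < i < q
          have hm := h2 p i q0 q hp' (lt_trans hq0 hq')
          rw [hCz q hq'] at hm
          have : X p q * X i q0 ≤ 0 := by nlinarith [h1 p q0]
          have hn := mul_nonneg (h1 p q) (le_of_lt hq0p)
          have : X p q * X i q0 = 0 := le_antisymm this hn
          rcases mul_eq_zero.mp this with h' | h'
          · exact h'
          · exact absurd h' (ne_of_gt hq0p)
        · exact hq' ▸ hB p hp'
      · subst hp'
        rcases lt_or_eq_of_le hq with hq' | hq'
        · exact hCz q hq'
        · exact hq' ▸ hii
    · -- ¬B ∧ ¬D : column i is zero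
      push_neg at hD
      apply hdet
      apply Matrix.det_eq_zero_of_column_eq_zero i
      intro p
      rcases lt_trichotomy p i with h' | h' | h'
      · exact hB p h'
      · exact h' ▸ hii
      · exact le_antisymm (hD p h') (h1 p i) |>.symm ▸ rfl
  · push_neg at hA
    have hAz : ∀ q, q < i → X i q = 0 := fun q hq => le_antisymm (hA q hq) (h1 i q)
    by_cases hC : ∃ q, i < q ∧ 0 < X i q
    · -- case C (and ¬A); then ¬D, so B ∧ C or col zero
      obtain ⟨q1, hq1, hq1p⟩ := hC
      have hDz : ∀ p, i < p → X p i = 0 := by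
        intro p hp
        have := sh2 p q1 hp hq1
        rcases mul_eq_zero.mp this with h' | h'
        · exact absurd h' (ne_of_gt hq1p)
        · exact h'
      -- rows ≥ i vanish on cols ≤ i ; use transpose
      apply hdet
      rw [← Matrix.det_transpose]
      apply det_eq_zero_of_block Xᵀ i
      intro p q hp hq
      show X q p = 0
      rcases lt_or_eq_of_le hq with hq' | hq'
      · rcases lt_or_eq_of_le hp with hp' | hp'
        · -- q > i, p < i : X q p with q > i, p < i
          have hm := h2 i q p q1 hq' (lt_of_le_of_lt (le_of_lt hp') hq1)
          rw [hAz p hp'] at hm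
          have : X i q1 * X q p ≤ 0 := by nlinarith [h1 i p, h1 q q1]
          have hn := mul_nonneg (le_of_lt hq1p) (h1 q p)
          have : X i q1 * X q p = 0 := le_antisymm this hn
          rcases mul_eq_zero.mp this with h' | h'
          · exact absurd h' (ne_of_gt hq1p)
          · exact h'
        · exact hp'.symm ▸ hDz q hq'
      · subst hq'
        rcases lt_or_eq_of_le hp with hp' | hp'
        · exact hAz p hp'
        · exact hp'.symm ▸ hii
    · -- ¬A ∧ ¬C : row i is zero
      push_neg at hC
      apply hdet
      apply Matrix.det_eq_zero_of_row_eq_zero i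
      intro q
      rcases lt_trichotomy q i with h' | h' | h'
      · exact hAz q h'
      · exact h' ▸ hii
      · exact le_antisymm (hC q h') (h1 i q) |>.symm ▸ rfl





lemma isKNonneg_transpose {n k : ℕ} {X : Matrix (Fin n) (Fin n) ℝ}
    (hX : IsKNonneg k X) : IsKNonneg k Xᵀ := by
  intro m hm I J hI hJ
  have h := hX m hm J I hJ hI
  have : (Xᵀ.submatrix I J) = (X.submatrix J I)ᵀ := by
    ext p q; rfl
  rw [this, Matrix.det_transpose]
  exact h

/-- A square block (on a proper subset of indices) of an `(n-1)`-nonnegative matrix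
has nonnegative determinant. -/
lemma block_det_nonneg {n : ℕ} {X : Matrix (Fin n) (Fin n) ℝ}
    (hX : IsKNonneg (n - 1) X) (p : Fin n → Prop) [DecidablePred p]
    (x : Fin n) (hx : ¬ p x) : 0 ≤ (Matrix.toSquareBlockProp X p).det := by
  set m := Fintype.card {i // p i} with hm
  have hcard : m < n := by
    have := Fintype.card_subtype_lt (p := p) (x := x) hx
    simpa using this
  have e : Fin m ≃o {i // p i} := monoEquivOfFin _ rfl
  set I : Fin m → Fin n := fun t => ((e t : {i // p i}) : Fin n) with hI
  have hIm : StrictMono I := by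
    intro u v huv
    exact Subtype.coe_lt_coe.mpr (e.strictMono huv)
  have h := hX m (by omega) I I hIm hIm
  have heq : (Matrix.toSquareBlockProp X p).det = (X.submatrix I I).det := by
    rw [← Matrix.det_submatrix_equiv_self e.toEquiv (Matrix.toSquareBlockProp X p)]
    congr 1
  rw [heq]
  exact h

/-- Expansion of the determinant of a matrix whose first row and column vanish
beyond the first two entries. -/
lemma det_tri_step {l : ℕ} (M : Matrix (Fin (l + 2)) (Fin (l + 2)) ℝ)
    (hr : ∀ q : Fin (l + 2), 2 ≤ (q : ℕ) → M 0 q = 0)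
    (hc : ∀ p : Fin (l + 2), 2 ≤ (p : ℕ) → M p 0 = 0) :
    M.det = M 0 0 * (M.submatrix Fin.succ Fin.succ).det
      - M 0 1 * M 1 0 * (M.submatrix (Fin.succ ∘ Fin.succ) (Fin.succ ∘ Fin.succ)).det := by
  rw [Matrix.det_succ_row_zero]
  rw [Fin.sum_univ_succ]
  rw [Fin.sum_univ_succ]
  have htail : ∀ j : Fin l,
      (-1 : ℝ) ^ ((j.succ.succ : Fin (l+2)) : ℕ) * M 0 j.succ.succ *
        (M.submatrix Fin.succ (j.succ.succ).succAbove).det = 0 := by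
    intro j
    have : M 0 j.succ.succ = 0 := hr _ (by simp [Fin.val_succ])
    rw [this]; ring
  rw [Finset.sum_eq_zero (fun j _ => htail j), add_zero]
  have h0 : (0 : Fin (l+2)).succAbove = Fin.succ := Fin.succAbove_zero
  rw [h0, Fin.succ_zero_eq_one]
  -- second term : expand (M.submatrix Fin.succ (1 : Fin (l+2)).succAbove).det along first column
  have hsecond : (M.submatrix Fin.succ ((1 : Fin (l+2)) : Fin (l+2)).succAbove).det
      = M 1 0 * (M.submatrix (Fin.succ ∘ Fin.succ) (Fin.succ ∘ Fin.succ)).det := by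
    have hsa : (1 : Fin (l+2)).succAbove 0 = 0 := by
      rw [Fin.succAbove_of_castSucc_lt _ _ (by simp [Fin.castSucc_zero])]
      rfl
    set N := M.submatrix Fin.succ ((1 : Fin (l+2))).succAbove with hN
    rw [Matrix.det_succ_column_zero]
    rw [Fin.sum_univ_succ]
    have hN00 : N 0 0 = M 1 0 := by
      simp only [hN, Matrix.submatrix_apply]
      rw [hsa, Fin.succ_zero_eq_one]
    have htail2 : ∀ p : Fin l,
        (-1 : ℝ) ^ ((p.succ : Fin (l+1)) : ℕ) * N p.succ 0 *
          (N.submatrix p.succ.succAbove Fin.succ).det = 0 := by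
      intro p
      have : N p.succ 0 = M p.succ.succ ((1 : Fin (l+2)).succAbove 0) := rfl
      have h2 : N p.succ 0 = 0 := by
        rw [this, hsa]
        exact hc _ (by simp [Fin.val_succ])
      rw [h2]; ring
    rw [Finset.sum_eq_zero (fun p _ => htail2 p), add_zero]
    rw [hN00]
    have hsub : N.submatrix (0 : Fin (l+1)).succAbove Fin.succ
        = M.submatrix (Fin.succ ∘ Fin.succ) (Fin.succ ∘ Fin.succ) := by
      rw [Fin.succAbove_zero]
      ext u v
      have hv : (1 : Fin (l+2)).succAbove v.succ = v.succ.succ :=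
        Fin.succAbove_of_le_castSucc _ _ (by
          rw [Fin.le_castSucc_iff]
          simp [Fin.lt_def, Fin.val_succ])
      simp [hN, Matrix.submatrix_apply, hv]
    rw [hsub]
    simp
  rw [hsecond]
  have hv0 : ((0 : Fin (l+2)) : ℕ) = 0 := rfl
  have hv1 : ((1 : Fin (l+2)) : ℕ) = 1 := rfl
  rw [hv0, hv1]
  ring

/-- Replacing the last column by the last standard basis vector picks out the
leading principal minor. -/
lemma det_updateColumn_single_last {k : ℕ} (M : Matrix (Fin (k + 1)) (Fin (k + 1)) ℝ) :
    (M.updateCol (Fin.last k) (Pi.single (Fin.last k) 1)).det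
      = (M.submatrix Fin.castSucc Fin.castSucc).det := by
  set N := M.updateCol (Fin.last k) (Pi.single (Fin.last k) 1) with hN
  rw [Matrix.det_succ_column N (Fin.last k)]
  have hterm : ∀ i : Fin (k+1), i ≠ Fin.last k →
      (-1 : ℝ) ^ ((i : ℕ) + ((Fin.last k) : ℕ)) * N i (Fin.last k) *
        (N.submatrix i.succAbove (Fin.last k).succAbove).det = 0 := by
    intro i hi
    have : N i (Fin.last k) = 0 := by
      simp only [hN, Matrix.updateCol_apply, if_pos rfl]
      exact Pi.single_eq_of_ne hi 1
    rw [this]; ring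
  rw [Finset.sum_eq_single (Fin.last k)]
  · have hNll : N (Fin.last k) (Fin.last k) = 1 := by
      simp only [hN, Matrix.updateCol_apply, if_pos rfl]
      exact Pi.single_eq_same _ _
    rw [hNll]
    have hsign : (-1 : ℝ) ^ (((Fin.last k) : ℕ) + ((Fin.last k) : ℕ)) = 1 := by
      rw [← two_mul, pow_mul]
      norm_num
    rw [hsign]
    have hsub : N.submatrix (Fin.last k).succAbove (Fin.last k).succAbove
        = M.submatrix Fin.castSucc Fin.castSucc := by
      rw [Fin.succAbove_last]
      ext u v
      simp only [hN, Matrix.submatrix_apply, Matrix.updateCol_apply]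
      rw [if_neg (Fin.castSucc_lt_last v).ne]
    rw [hsub]
    ring
  · intro i _ hi
    exact hterm i hi
  · intro hh
    exact absurd (Finset.mem_univ _) hh

/-- Replacing the first column by the first standard basis vector picks out the
trailing principal minor. -/
lemma det_updateColumn_single_zero {k : ℕ} (M : Matrix (Fin (k + 1)) (Fin (k + 1)) ℝ) :
    (M.updateCol 0 (Pi.single 0 1)).det
      = (M.submatrix Fin.succ Fin.succ).det := by
  set N := M.updateCol 0 (Pi.single 0 1) with hN
  rw [Matrix.det_succ_column_zero N]
  rw [Fin.sum_univ_succ]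
  have htail : ∀ i : Fin k,
      (-1 : ℝ) ^ ((i.succ : Fin (k+1)) : ℕ) * N i.succ 0 *
        (N.submatrix i.succ.succAbove Fin.succ).det = 0 := by
    intro i
    have : N i.succ 0 = 0 := by
      simp only [hN, Matrix.updateCol_apply, if_pos rfl]
      exact Pi.single_eq_of_ne (Fin.succ_ne_zero i) 1
    rw [this]; ring
  rw [Finset.sum_eq_zero (fun i _ => htail i), add_zero]
  have hN00 : N 0 0 = 1 := by
    simp only [hN, Matrix.updateCol_apply, if_pos rfl]
    exact Pi.single_eq_same _ _
  rw [hN00, Fin.succAbove_zero]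
  have hsub : N.submatrix Fin.succ Fin.succ = M.submatrix Fin.succ Fin.succ := by
    ext u v
    simp only [hN, Matrix.submatrix_apply, Matrix.updateCol_apply]
    rw [if_neg (Fin.succ_ne_zero v)]
  rw [hsub]
  simp







variable {m : ℕ} {a b : ℕ → ℝ}

section entries

lemma KE1 {p q : Fin (m+3)} (hp : (p : ℕ) = m+2) (hq : (q : ℕ) = m+2) :
    Kgen (m+3) a b p q = b (m+1) * KgenX (m+3) a b := by
  simp only [Kgen]
  rw [if_pos ⟨by omega, by omega⟩, show m+3-2 = m+1 by omega]

lemma KE2 {p q : Fin (m+3)} (hp : (p : ℕ) = m+1) (hq : (q : ℕ) = m+1) :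
    Kgen (m+3) a b p q = b m := by
  simp only [Kgen]
  rw [if_neg (by omega), if_pos ⟨by omega, by omega⟩]
  norm_num

lemma KE3 {p q : Fin (m+3)} (hp : (p : ℕ) = 0) (hq : (q : ℕ) = 0) :
    Kgen (m+3) a b p q = a 0 := by
  simp only [Kgen]
  rw [if_neg (by omega), if_neg (by omega), if_pos ⟨by omega, by omega⟩]

lemma KE4 {p q : Fin (m+3)} (h0 : (p : ℕ) = (q : ℕ)) (h1 : 1 ≤ (p : ℕ))
    (h2 : (p : ℕ) ≤ m) :
    Kgen (m+3) a b p q = a (p : ℕ) + b ((p : ℕ) - 1) := by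
  simp only [Kgen]
  rw [if_neg (by omega), if_neg (by omega), if_neg (by omega), if_pos (by omega)]

lemma KE5 {p q : Fin (m+3)} (hp : (p : ℕ) = m+1) (hq : (q : ℕ) = m+2) :
    Kgen (m+3) a b p q = b (m+1) * KgenY (m+3) b := by
  simp only [Kgen]
  rw [if_neg (by omega), if_neg (by omega), if_neg (by omega), if_neg (by omega),
    if_pos ⟨by omega, by omega⟩, show m+3-2 = m+1 by omega]

lemma KE6 {p q : Fin (m+3)} (h0 : (q : ℕ) = (p : ℕ) + 1) (h2 : (p : ℕ) ≤ m) :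
    Kgen (m+3) a b p q = a (p : ℕ) * b (p : ℕ) := by
  simp only [Kgen]
  rw [if_neg (by omega), if_neg (by omega), if_neg (by omega), if_neg (by omega),
    if_neg (by omega), if_pos (by omega)]

lemma KE7 {p q : Fin (m+3)} (h0 : (p : ℕ) = (q : ℕ) + 1) :
    Kgen (m+3) a b p q = 1 := by
  have hp := p.isLt
  simp only [Kgen]
  rw [if_neg (by omega), if_neg (by omega), if_neg (by omega), if_neg (by omega),
    if_neg (by omega), if_neg (by omega), if_pos (by omega)]

lemma KE8 {p q : Fin (m+3)} (h0 : (q : ℕ) + 2 ≤ (p : ℕ) ∨ (p : ℕ) + 2 ≤ (q : ℕ)) :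
    Kgen (m+3) a b p q = 0 := by
  simp only [Kgen]
  rw [if_neg (by omega), if_neg (by omega), if_neg (by omega), if_neg (by omega),
    if_neg (by omega), if_neg (by omega), if_neg (by omega)]

end entries

/-- Forward offset embedding. -/
def embf (m j k : ℕ) : Fin k → Fin (m+3) :=
  fun t => ⟨(j + t.val) % (m+3), Nat.mod_lt _ (by omega)⟩

lemma embf_val {m j k : ℕ} (t : Fin k) (h : j + t.val < m+3) :
    ((embf m j k t) : ℕ) = j + t.val := Nat.mod_eq_of_lt h

/-- Reversed leading embedding. -/
def embr (m k : ℕ) : Fin k → Fin (m+3) :=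
  fun t => ⟨(k - 1 - t.val) % (m+3), Nat.mod_lt _ (by omega)⟩

lemma embr_val {m k : ℕ} (t : Fin k) (h : k - 1 - t.val < m+3) :
    ((embr m k t) : ℕ) = k - 1 - t.val := Nat.mod_eq_of_lt h

lemma embf_succ (m j k : ℕ) :
    (embf m j (k+1)) ∘ Fin.succ = embf m (j+1) k := by
  funext t
  apply Fin.ext
  show (j + (t.val + 1)) % (m+3) = ((j+1) + t.val) % (m+3)
  congr 1
  omega

lemma embr_succ (m k : ℕ) :
    (embr m (k+1)) ∘ Fin.succ = embr m k := by
  funext t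
  apply Fin.ext
  show ((k+1) - 1 - (t.val + 1)) % (m+3) = (k - 1 - t.val) % (m+3)
  congr 1
  omega


end KgenAux
section part4
namespace KgenAux
variable {m : ℕ} {a b : ℕ → ℝ}

lemma embf_succ2 (m j k : ℕ) :
    (embf m j (k+2)) ∘ (Fin.succ ∘ Fin.succ) = embf m (j+2) k := by
  funext t
  apply Fin.ext
  show (j + (t.val + 1 + 1)) % (m+3) = ((j+2) + t.val) % (m+3)
  congr 1
  omega

lemma embr_succ2 (m k : ℕ) :
    (embr m (k+2)) ∘ (Fin.succ ∘ Fin.succ) = embr m k := by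
  funext t
  apply Fin.ext
  show ((k+2) - 1 - (t.val + 1 + 1)) % (m+3) = (k - 1 - t.val) % (m+3)
  congr 1
  omega

lemma embf_val' (m j k : ℕ) (t : Fin k) (h : j + k ≤ m+3) :
    ((embf m j k t) : ℕ) = j + t.val := by
  have := t.isLt
  exact Nat.mod_eq_of_lt (by omega)

lemma embr_val' (m k : ℕ) (t : Fin k) (h : k ≤ m+3) :
    ((embr m k t) : ℕ) = k - 1 - t.val := Nat.mod_eq_of_lt (by omega)

theorem lead_det (m : ℕ) (a b : ℕ → ℝ) :
    ∀ k, k ≤ m+1 →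
      ((Kgen (m+3) a b).submatrix (embr m k) (embr m k)).det
        = ∏ x ∈ Finset.range k, a x := by
  intro k
  induction k using Nat.strong_induction_on with
  | _ k IH =>
    rcases k with _ | (_ | l)
    · intro _
      simp [Matrix.det_fin_zero]
    · intro _
      rw [Matrix.det_fin_one, Matrix.submatrix_apply]
      have hv : ((embr m 1 (0 : Fin 1)) : ℕ) = 0 := by
        rw [embr_val' m 1 _ (by omega)]
        simp
      rw [KE3 hv hv]
      simp
    · intro hk
      have hv0 : ((embr m (l+2) (0 : Fin (l+2))) : ℕ) = l+1 := by
        rw [embr_val' m (l+2) _ (by omega), Fin.val_zero]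
        omega
      have hv1 : ((embr m (l+2) (1 : Fin (l+2))) : ℕ) = l := by
        rw [embr_val' m (l+2) _ (by omega), Fin.val_one]
        omega
      rw [det_tri_step _ ?hr ?hc]
      case hr =>
        intro q hq
        rw [Matrix.submatrix_apply]
        apply KE8
        left
        rw [embr_val' m (l+2) q (by omega), hv0]
        have := q.isLt
        omega
      case hc =>
        intro p hp
        rw [Matrix.submatrix_apply]
        apply KE8
        right
        rw [embr_val' m (l+2) p (by omega), hv0]
        have := p.isLt
        omega
      simp only [Matrix.submatrix_apply]
      have e00 : (Kgen (m+3) a b) (embr m (l+2) 0) (embr m (l+2) 0) = a (l+1) + b l := by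
        rw [KE4 rfl (by rw [hv0]; omega) (by rw [hv0]; omega), hv0, Nat.add_sub_cancel]
      have e01 : (Kgen (m+3) a b) (embr m (l+2) 0) (embr m (l+2) 1) = 1 :=
        KE7 (by rw [hv0, hv1])
      have e10 : (Kgen (m+3) a b) (embr m (l+2) 1) (embr m (l+2) 0) = a l * b l := by
        rw [KE6 (by rw [hv0, hv1]) (by rw [hv1]; omega), hv1]
      rw [e00, e01, e10]
      rw [Matrix.submatrix_submatrix, Matrix.submatrix_submatrix, embr_succ, embr_succ2]
      rw [IH (l+1) (by omega) (by omega), IH l (by omega) (by omega)]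
      rw [Finset.prod_range_succ (n := l+1), Finset.prod_range_succ (n := l)]
      ring

theorem trail_det (m : ℕ) (a b : ℕ → ℝ) :
    ∀ k j, j + k = m+3 → 1 ≤ j → 1 ≤ k →
      ((Kgen (m+3) a b).submatrix (embf m j k) (embf m j k)).det
        = b (m+1) * (∏ l ∈ Finset.Ico (j-1) (m+1), b l)
            * (∑ t ∈ Finset.range (j-1),
                (∏ x ∈ Finset.range t, b x) * ∏ x ∈ Finset.Ico (t+1) (m+1), a x) := by
  intro k
  induction k using Nat.strong_induction_on with
  | _ k IH =>
    rcases k with _ | (_ | (_ | l))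
    · intro j hj hj1 hk1
      exact absurd hk1 (by omega)
    · -- k = 1, j = m+2
      intro j hj hj1 _
      have hjv : j = m+2 := by omega
      subst hjv
      rw [Matrix.det_fin_one, Matrix.submatrix_apply]
      have hv : ((embf m (m+2) 1 (0 : Fin 1)) : ℕ) = m+2 := by
        rw [embf_val' m (m+2) 1 _ (by omega), Fin.val_zero]
      rw [KE1 hv hv]
      have h1 : KgenX (m+3) a b
          = ∑ t ∈ Finset.range (m+1),
              (∏ x ∈ Finset.range t, b x) * ∏ x ∈ Finset.Ico (t+1) (m+1), a x := by
        simp only [KgenX, show m+3-2 = m+1 by omega]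
      rw [h1, show m+2-1 = m+1 by omega, Finset.Ico_self, Finset.prod_empty]
      ring
    · -- k = 2, j = m+1
      intro j hj hj1 _
      have hjv : j = m+1 := by omega
      subst hjv
      rw [Matrix.det_fin_two]
      simp only [Matrix.submatrix_apply]
      have hv0 : ((embf m (m+1) 2 (0 : Fin 2)) : ℕ) = m+1 := by
        rw [embf_val' m (m+1) 2 _ (by omega), Fin.val_zero]
      have hv1 : ((embf m (m+1) 2 (1 : Fin 2)) : ℕ) = m+2 := by
        rw [embf_val' m (m+1) 2 _ (by omega), Fin.val_one]
      have e00 := KE2 (a := a) (b := b) hv0 hv0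
      have e01 := KE5 (a := a) (b := b) hv0 hv1
      have e11 := KE1 (a := a) (b := b) hv1 hv1
      have e10 : (Kgen (m+3) a b) (embf m (m+1) 2 1) (embf m (m+1) 2 0) = 1 :=
        KE7 (by rw [hv0, hv1])
      rw [e00, e01, e11, e10]
      have hX : KgenX (m+3) a b
          = (∑ t ∈ Finset.range m,
              (∏ x ∈ Finset.range t, b x) * ∏ x ∈ Finset.Ico (t+1) (m+1), a x)
            + (∏ x ∈ Finset.range m, b x) := by
        simp only [KgenX, show m+3-2 = m+1 by omega]
        rw [Finset.sum_range_succ, Finset.Ico_self, Finset.prod_empty, mul_one]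
      have hY : KgenY (m+3) b = (∏ x ∈ Finset.range m, b x) * b m := by
        simp only [KgenY, show m+3-2 = m+1 by omega]
        rw [Finset.prod_range_succ]
      rw [hX, hY, show m+1-1 = m by omega, Nat.Ico_succ_singleton, Finset.prod_singleton]
      ring
    · -- k = l+3, j ≤ m
      intro j hj hj1 _
      obtain ⟨j', rfl⟩ : ∃ j'', j = j'' + 1 := ⟨j - 1, by omega⟩
      have hv0 : ((embf m (j'+1) (l+3) (0 : Fin (l+3))) : ℕ) = j'+1 := by
        rw [embf_val' m _ _ _ (by omega), Fin.val_zero]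
      have hv1 : ((embf m (j'+1) (l+3) (1 : Fin (l+3))) : ℕ) = j'+2 := by
        rw [embf_val' m _ _ _ (by omega), Fin.val_one]
      rw [det_tri_step _ ?hr ?hc]
      case hr =>
        intro q hq
        rw [Matrix.submatrix_apply]
        apply KE8
        right
        rw [embf_val' m _ _ q (by omega), hv0]
        omega
      case hc =>
        intro p hp
        rw [Matrix.submatrix_apply]
        apply KE8
        left
        rw [embf_val' m _ _ p (by omega), hv0]
        omega
      simp only [Matrix.submatrix_apply]
      have e00 : (Kgen (m+3) a b) (embf m (j'+1) (l+3) 0) (embf m (j'+1) (l+3) 0)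
          = a (j'+1) + b j' := by
        rw [KE4 rfl (by rw [hv0]; omega) (by rw [hv0]; omega), hv0, Nat.add_sub_cancel]
      have e01 : (Kgen (m+3) a b) (embf m (j'+1) (l+3) 0) (embf m (j'+1) (l+3) 1)
          = a (j'+1) * b (j'+1) := by
        rw [KE6 (by rw [hv0, hv1]) (by rw [hv0]; omega), hv0]
      have e10 : (Kgen (m+3) a b) (embf m (j'+1) (l+3) 1) (embf m (j'+1) (l+3) 0) = 1 :=
        KE7 (by rw [hv0, hv1])
      rw [e00, e01, e10]
      rw [Matrix.submatrix_submatrix, Matrix.submatrix_submatrix, embf_succ, embf_succ2]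
      rw [IH (l+2) (by omega) (j'+2) (by omega) (by omega) (by omega),
        IH (l+1) (by omega) (j'+3) (by omega) (by omega) (by omega)]
      simp only [Nat.add_sub_cancel]
      rw [show j'+2-1 = j'+1 by omega, show j'+3-1 = j'+2 by omega]
      rw [Finset.prod_eq_prod_Ico_succ_bot (by omega : j' < m+1) b]
      rw [Finset.prod_eq_prod_Ico_succ_bot (by omega : j'+1 < m+1) b]
      rw [Finset.sum_range_succ (n := j'+1), Finset.sum_range_succ (n := j')]
      rw [Finset.prod_eq_prod_Ico_succ_bot (by omega : j'+1 < m+1) a]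
      rw [Finset.prod_range_succ (n := j')]
      ring

end KgenAux
end part4
section part5
namespace KgenAux
variable {m : ℕ} {a b : ℕ → ℝ}

lemma succ_eq_embf1 : (Fin.succ : Fin (m+2) → Fin (m+3)) = embf m 1 (m+2) := by
  funext t
  apply Fin.ext
  rw [Fin.val_succ, embf_val' m 1 (m+2) t (by omega)]
  omega

lemma succ2_eq_embf2 :
    ((Fin.succ ∘ Fin.succ) : Fin (m+1) → Fin (m+3)) = embf m 2 (m+1) := by
  funext t
  apply Fin.ext
  show (t.val + 1) + 1 = _
  rw [embf_val' m 2 (m+1) t (by omega)]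
  omega

lemma castSucc_rev_eq_embr :
    ((Fin.castSucc : Fin (m+2) → Fin (m+3)) ∘ ⇑(Fin.revPerm : Equiv.Perm (Fin (m+2))))
      = embr m (m+2) := by
  funext t
  apply Fin.ext
  show ((Fin.rev t : Fin (m+2)) : ℕ) = _
  rw [Fin.val_rev, embr_val' m (m+2) t (by omega)]
  omega

lemma castSucc2_rev_eq_embr :
    (((Fin.castSucc : Fin (m+2) → Fin (m+3)) ∘ (Fin.castSucc : Fin (m+1) → Fin (m+2))) ∘ ⇑(Fin.revPerm : Equiv.Perm (Fin (m+1))))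
      = embr m (m+1) := by
  funext t
  apply Fin.ext
  show ((Fin.rev t : Fin (m+1)) : ℕ) = _
  rw [Fin.val_rev, embr_val' m (m+1) t (by omega)]
  omega

/-- The reversed leading `(m+2)`-block of `Kgen` has zero determinant. -/
lemma lead_pen_det :
    ((Kgen (m+3) a b).submatrix (embr m (m+2)) (embr m (m+2))).det = 0 := by
  have hv0 : ((embr m (m+2) (0 : Fin (m+2))) : ℕ) = m+1 := by
    rw [embr_val' m (m+2) _ (by omega), Fin.val_zero]
    omega
  have hv1 : ((embr m (m+2) (1 : Fin (m+2))) : ℕ) = m := by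
    rw [embr_val' m (m+2) _ (by omega), Fin.val_one]
    omega
  rw [det_tri_step _ ?hr ?hc]
  case hr =>
    intro q hq
    rw [Matrix.submatrix_apply]
    apply KE8
    left
    rw [embr_val' m (m+2) q (by omega), hv0]
    have := q.isLt
    omega
  case hc =>
    intro p hp
    rw [Matrix.submatrix_apply]
    apply KE8
    right
    rw [embr_val' m (m+2) p (by omega), hv0]
    have := p.isLt
    omega
  simp only [Matrix.submatrix_apply]
  have e00 : (Kgen (m+3) a b) (embr m (m+2) 0) (embr m (m+2) 0) = b m :=
    KE2 hv0 hv0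
  have e01 : (Kgen (m+3) a b) (embr m (m+2) 0) (embr m (m+2) 1) = 1 :=
    KE7 (by rw [hv0, hv1])
  have e10 : (Kgen (m+3) a b) (embr m (m+2) 1) (embr m (m+2) 0) = a m * b m := by
    rw [KE6 (by rw [hv0, hv1]) (by rw [hv1]), hv1]
  rw [e00, e01, e10]
  rw [Matrix.submatrix_submatrix, Matrix.submatrix_submatrix, embr_succ, embr_succ2]
  rw [lead_det m a b (m+1) (by omega), lead_det m a b m (by omega)]
  rw [Finset.prod_range_succ]
  ring

theorem Kgen_D1 :
    ((Kgen (m+3) a b).submatrix Fin.castSucc Fin.castSucc).det = 0 := by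
  rw [← Matrix.det_submatrix_equiv_self (Fin.revPerm : Equiv.Perm (Fin (m+2)))
      ((Kgen (m+3) a b).submatrix Fin.castSucc Fin.castSucc)]
  rw [Matrix.submatrix_submatrix, castSucc_rev_eq_embr]
  exact lead_pen_det

theorem Kgen_D2 :
    ((Kgen (m+3) a b).submatrix
        ((Fin.castSucc : Fin (m+2) → Fin (m+3)) ∘ (Fin.castSucc : Fin (m+1) → Fin (m+2)))
        ((Fin.castSucc : Fin (m+2) → Fin (m+3)) ∘ (Fin.castSucc : Fin (m+1) → Fin (m+2)))).det
      = ∏ x ∈ Finset.range (m+1), a x := by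
  rw [← Matrix.det_submatrix_equiv_self (Fin.revPerm : Equiv.Perm (Fin (m+1)))]
  rw [Matrix.submatrix_submatrix, castSucc2_rev_eq_embr]
  exact lead_det m a b (m+1) (by omega)

theorem Kgen_T1 :
    ((Kgen (m+3) a b).submatrix (Fin.succ : Fin (m+2) → Fin (m+3)) Fin.succ).det = 0 := by
  rw [succ_eq_embf1, trail_det m a b (m+2) 1 (by omega) (by omega) (by omega)]
  simp

theorem Kgen_T2 :
    ((Kgen (m+3) a b).submatrix ((Fin.succ ∘ Fin.succ) : Fin (m+1) → Fin (m+3))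
        (Fin.succ ∘ Fin.succ)).det
      = b (m+1) * (∏ l ∈ Finset.Ico 1 (m+1), b l) * ∏ x ∈ Finset.Ico 1 (m+1), a x := by
  rw [succ2_eq_embf2, trail_det m a b (m+1) 2 (by omega) (by omega) (by omega)]
  rw [show (2:ℕ)-1 = 1 by omega, Finset.sum_range_one, Finset.prod_range_zero, one_mul]

theorem Kgen_det_eq :
    (Kgen (m+3) a b).det
      = -(b (m+1) * KgenY (m+3) b * ∏ x ∈ Finset.range (m+1), a x) := by
  have hfull : embr m (m+3) = ⇑(Fin.revPerm : Equiv.Perm (Fin (m+3))) := by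
    funext t
    apply Fin.ext
    rw [embr_val' m (m+3) t (by omega)]
    show _ = ((Fin.rev t : Fin (m+3)) : ℕ)
    rw [Fin.val_rev]
    omega
  rw [← Matrix.det_submatrix_equiv_self (Fin.revPerm : Equiv.Perm (Fin (m+3)))
      (Kgen (m+3) a b), ← hfull]
  have hv0 : ((embr m (m+3) (0 : Fin (m+3))) : ℕ) = m+2 := by
    rw [embr_val' m (m+3) _ (by omega), Fin.val_zero]
    omega
  have hv1 : ((embr m (m+3) (1 : Fin (m+3))) : ℕ) = m+1 := by
    rw [embr_val' m (m+3) _ (by omega), Fin.val_one]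
    omega
  rw [det_tri_step _ ?hr ?hc]
  case hr =>
    intro q hq
    rw [Matrix.submatrix_apply]
    apply KE8
    left
    rw [embr_val' m (m+3) q (by omega), hv0]
    have := q.isLt
    omega
  case hc =>
    intro p hp
    rw [Matrix.submatrix_apply]
    apply KE8
    right
    rw [embr_val' m (m+3) p (by omega), hv0]
    have := p.isLt
    omega
  simp only [Matrix.submatrix_apply]
  have e00 : (Kgen (m+3) a b) (embr m (m+3) 0) (embr m (m+3) 0)
      = b (m+1) * KgenX (m+3) a b := KE1 hv0 hv0
  have e01 : (Kgen (m+3) a b) (embr m (m+3) 0) (embr m (m+3) 1) = 1 :=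
    KE7 (by rw [hv0, hv1])
  have e10 : (Kgen (m+3) a b) (embr m (m+3) 1) (embr m (m+3) 0)
      = b (m+1) * KgenY (m+3) b := KE5 hv1 hv0
  rw [e00, e01, e10]
  rw [Matrix.submatrix_submatrix, Matrix.submatrix_submatrix, embr_succ, embr_succ2]
  rw [lead_pen_det, lead_det m a b (m+1) (by omega)]
  ring

end KgenAux
end part5
section part6
namespace KgenAux

set_option maxHeartbeats 2000000 in
theorem core (m : ℕ) (K R S : Matrix (Fin (m+3)) (Fin (m+3)) ℝ)
    (hRu : IsUnit R) (hSu : IsUnit S)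
    (hRk : IsKNonneg (m+2) R) (hSk : IsKNonneg (m+2) S)
    (hRS : R * S = K) (hdetS : S.det < 0)
    (hK0 : ∀ p q : Fin (m+3), (q:ℕ)+2 ≤ (p:ℕ) ∨ (p:ℕ)+2 ≤ (q:ℕ) → K p q = 0)
    (hD1 : (K.submatrix Fin.castSucc Fin.castSucc).det = 0)
    (hD2 : 0 < (K.submatrix
        ((Fin.castSucc : Fin (m+2) → Fin (m+3)) ∘ (Fin.castSucc : Fin (m+1) → Fin (m+2)))
        ((Fin.castSucc : Fin (m+2) → Fin (m+3)) ∘ (Fin.castSucc : Fin (m+1) → Fin (m+2)))).det)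
    (hT1 : (K.submatrix (Fin.succ : Fin (m+2) → Fin (m+3)) Fin.succ).det = 0)
    (hT2 : 0 < (K.submatrix
        ((Fin.succ : Fin (m+2) → Fin (m+3)) ∘ (Fin.succ : Fin (m+1) → Fin (m+2)))
        ((Fin.succ : Fin (m+2) → Fin (m+3)) ∘ (Fin.succ : Fin (m+1) → Fin (m+2)))).det) :
    ∀ p q : Fin (m+3), p ≠ q → R p q = 0 := by
  have hdetRne : R.det ≠ 0 := by
    have := (Matrix.isUnit_iff_isUnit_det R).mp hRu
    exact this.ne_zero
  have hdetSne : S.det ≠ 0 := ne_of_lt hdetS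
  have hRnn : ∀ p q, 0 ≤ R p q := fun p q => entry_nonneg hRk (by omega) p q
  have hSnn : ∀ p q, 0 ≤ S p q := fun p q => entry_nonneg hSk (by omega) p q
  have hR2 : ∀ p p' q q' : Fin (m+3), p < p' → q < q' →
      0 ≤ R p q * R p' q' - R p q' * R p' q := fun p p' q q' hp hq =>
    minor2 hRk (by omega) hp hq
  have hS2 : ∀ p p' q q' : Fin (m+3), p < p' → q < q' →
      0 ≤ S p q * S p' q' - S p q' * S p' q := fun p p' q q' hp hq =>
    minor2 hSk (by omega) hp hq
  have hRdiag : ∀ i, 0 < R i i := diag_pos hRnn hR2 hdetRne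
  have hSdiag : ∀ i, 0 < S i i := diag_pos hSnn hS2 hdetSne
  have hprod : ∀ p q : Fin (m+3), ((q:ℕ)+2 ≤ (p:ℕ) ∨ (p:ℕ)+2 ≤ (q:ℕ)) →
      ∀ t, R p t * S t q = 0 := by
    intro p q h t
    have hsum : (∑ t, R p t * S t q) = 0 := by
      have h1 : (R * S) p q = K p q := by rw [hRS]
      rw [Matrix.mul_apply] at h1
      rw [h1, hK0 p q h]
    exact (Finset.sum_eq_zero_iff_of_nonneg
      (fun t _ => mul_nonneg (hRnn p t) (hSnn t q))).mp hsum t (Finset.mem_univ t)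
  have hRtri : ∀ p q : Fin (m+3), ((q:ℕ)+2 ≤ (p:ℕ) ∨ (p:ℕ)+2 ≤ (q:ℕ)) → R p q = 0 := by
    intro p q h
    have := hprod p q h q
    rcases mul_eq_zero.mp this with h' | h'
    · exact h'
    · exact absurd h' (ne_of_gt (hSdiag q))
  have hStri : ∀ p q : Fin (m+3), ((q:ℕ)+2 ≤ (p:ℕ) ∨ (p:ℕ)+2 ≤ (q:ℕ)) → S p q = 0 := by
    intro p q h
    have := hprod p q h p
    rcases mul_eq_zero.mp this with h' | h'
    · exact absurd h' (ne_of_gt (hRdiag p))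
    · exact h'
  have hSk' : IsKNonneg ((m+3) - 1) S := hSk
  -- Step f : the whole band of S is positive
  have hSband : ∀ p q : Fin (m+3), (q:ℕ) = (p:ℕ)+1 → 0 < S p q ∧ 0 < S q p := by
    intro p q hpq
    have hplast : p < Fin.last (m+2) := by
      rw [Fin.lt_def]
      have := q.isLt
      simp only [Fin.val_last]
      omega
    constructor
    · rcases lt_or_eq_of_le (hSnn p q) with h | h
      · exact h
      exfalso
      have hzero : ∀ i : Fin (m+3), i ≤ p → ∀ j : Fin (m+3), ¬ j ≤ p → S i j = 0 := by
        intro i hi j hj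
        have hj' : p < j := not_le.mp hj
        rw [Fin.le_def] at hi
        rw [Fin.lt_def] at hj'
        rcases Nat.lt_or_ge ((i:ℕ)+1) (j:ℕ) with hc | hc
        · exact hStri i j (Or.inr (by omega))
        · -- j = i+1 and i = p, so i = p, j = q
          have hiv : (i:ℕ) = (p:ℕ) := by omega
          have hjv : (j:ℕ) = (q:ℕ) := by omega
          have : i = p := Fin.ext hiv
          have h2 : j = q := Fin.ext hjv
          rw [this, h2, h]
      have hsplit := Matrix.twoBlockTriangular_det' S (fun x => x ≤ p) hzero
      have h1 : 0 ≤ (Matrix.toSquareBlockProp S (fun x => x ≤ p)).det :=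
        block_det_nonneg hSk' _ (Fin.last (m+2)) (not_le.mpr hplast)
      have h2 : 0 ≤ (Matrix.toSquareBlockProp S (fun x => ¬ x ≤ p)).det :=
        block_det_nonneg hSk' _ 0 (not_not_intro (Fin.zero_le p))
      rw [hsplit] at hdetS
      nlinarith
    · rcases lt_or_eq_of_le (hSnn q p) with h | h
      · exact h
      exfalso
      have hzero : ∀ i : Fin (m+3), ¬ i ≤ p → ∀ j : Fin (m+3), j ≤ p → S i j = 0 := by
        intro i hi j hj
        have hi' : p < i := not_le.mp hi
        rw [Fin.le_def] at hj
        rw [Fin.lt_def] at hi'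
        rcases Nat.lt_or_ge ((j:ℕ)+1) (i:ℕ) with hc | hc
        · exact hStri i j (Or.inl (by omega))
        · have hiv : (i:ℕ) = (q:ℕ) := by omega
          have hjv : (j:ℕ) = (p:ℕ) := by omega
          have h1 : i = q := Fin.ext hiv
          have h2 : j = p := Fin.ext hjv
          rw [h1, h2, h]
      have hsplit := Matrix.twoBlockTriangular_det S (fun x => x ≤ p) hzero
      have h1 : 0 ≤ (Matrix.toSquareBlockProp S (fun x => x ≤ p)).det :=
        block_det_nonneg hSk' _ (Fin.last (m+2)) (not_le.mpr hplast)
      have h2 : 0 ≤ (Matrix.toSquareBlockProp S (fun x => ¬ x ≤ p)).det :=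
        block_det_nonneg hSk' _ 0 (not_not_intro (Fin.zero_le p))
      rw [hsplit] at hdetS
      nlinarith
  -- Step g : off-band entries of R vanish except the two corners
  have hRupper0 : ∀ p q : Fin (m+3), (q:ℕ) = (p:ℕ)+1 → (q:ℕ) ≤ m+1 → R p q = 0 := by
    intro p q hq hqle
    set w : Fin (m+3) := ⟨(q:ℕ)+1, by omega⟩ with hw
    have hzero := hprod p w (Or.inr (by simp [hw]; omega)) q
    have hSpos : 0 < S q w := (hSband q w (by simp [hw])).1
    rcases mul_eq_zero.mp hzero with h' | h'
    · exact h'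
    · exact absurd h' (ne_of_gt hSpos)
  have hRlower0 : ∀ p q : Fin (m+3), (p:ℕ) = (q:ℕ)+1 → 1 ≤ (q:ℕ) → R p q = 0 := by
    intro p q hp hqge
    set w : Fin (m+3) := ⟨(q:ℕ)-1, by omega⟩ with hw
    have hzero := hprod p w (Or.inl (by simp [hw]; omega)) q
    have hSpos : 0 < S q w := (hSband w q (by simp [hw]; omega)).2
    rcases mul_eq_zero.mp hzero with h' | h'
    · exact h'
    · exact absurd h' (ne_of_gt hSpos)
  -- Step h : the upper corner entry R ⟨m+1⟩ ⟨m+2⟩ vanishes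
  set u : Fin (m+3) := ⟨m+1, by omega⟩ with hu
  set v : Fin (m+3) := ⟨m+2, by omega⟩ with hv
  have halpha : R u v = 0 := by
    set RL := R.submatrix (Fin.castSucc : Fin (m+2) → Fin (m+3)) Fin.castSucc with hRL
    set SL := S.submatrix (Fin.castSucc : Fin (m+2) → Fin (m+3)) Fin.castSucc with hSL
    have key : ∀ p q : Fin (m+2),
        K (Fin.castSucc p) (Fin.castSucc q) = (RL * SL) p q
          + (if p = Fin.last (m+1) ∧ q = Fin.last (m+1) then R u v * S v u else 0) := by
      intro p q
      have h1 : K (Fin.castSucc p) (Fin.castSucc q)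
          = ∑ t : Fin (m+3), R (Fin.castSucc p) t * S t (Fin.castSucc q) := by
        rw [← hRS, Matrix.mul_apply]
      rw [Fin.sum_univ_castSucc] at h1
      have h2 : (RL * SL) p q
          = ∑ t : Fin (m+2), R (Fin.castSucc p) (Fin.castSucc t) * S (Fin.castSucc t) (Fin.castSucc q) := by
        rw [Matrix.mul_apply]
        rfl
      rw [h1, h2]
      congr 1
      by_cases hp : p = Fin.last (m+1)
      · by_cases hq : q = Fin.last (m+1)
        · rw [if_pos ⟨hp, hq⟩, hp, hq]
          congr 1 <;> apply Fin.ext <;> simp [hu, hv, Fin.val_last]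
        · rw [if_neg (fun hcon => hq hcon.2)]
          have hqv : (q:ℕ) ≤ m := by
            have := q.isLt
            rcases Nat.lt_or_ge (q:ℕ) (m+1) with h | h
            · omega
            · exact absurd (Fin.ext (by simp [Fin.val_last]; omega)) hq
          have : S (Fin.last (m+2)) (Fin.castSucc q) = 0 :=
            hStri _ _ (Or.inl (by simp [Fin.val_last, Fin.coe_castSucc]; omega))
          rw [this, mul_zero]
      · rw [if_neg (fun hcon => hp hcon.1)]
        have hpv : (p:ℕ) ≤ m := by
          have := p.isLt
          rcases Nat.lt_or_ge (p:ℕ) (m+1) with h | h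
          · omega
          · exact absurd (Fin.ext (by simp [Fin.val_last]; omega)) hp
        have : R (Fin.castSucc p) (Fin.last (m+2)) = 0 :=
          hRtri _ _ (Or.inr (by simp [Fin.val_last, Fin.coe_castSucc]; omega))
        rw [this, zero_mul]
    have hKL : K.submatrix (Fin.castSucc : Fin (m+2) → Fin (m+3)) Fin.castSucc
        = Matrix.updateCol (RL * SL) (Fin.last (m+1))
            ((fun p => (RL * SL) p (Fin.last (m+1)))
              + Pi.single (Fin.last (m+1)) (R u v * S v u)) := by
      ext p q
      rw [Matrix.updateCol_apply]
      by_cases hq : q = Fin.last (m+1)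
      · subst hq
        rw [if_pos rfl, Matrix.submatrix_apply, key]
        simp only [Pi.add_apply, Pi.single_apply]
        congr 1
        by_cases hp : p = Fin.last (m+1) <;> simp [hp]
      · rw [if_neg hq, Matrix.submatrix_apply, key, if_neg (fun hcon => hq hcon.2), add_zero]
    have hD1' := hD1
    rw [hKL, Matrix.det_updateCol_add] at hD1'
    rw [Matrix.updateCol_eq_self] at hD1'
    have hsingle : (Pi.single (Fin.last (m+1)) (R u v * S v u) : Fin (m+2) → ℝ)
        = (R u v * S v u) • (Pi.single (Fin.last (m+1)) (1:ℝ) : Fin (m+2) → ℝ) := by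
      ext x
      simp only [Pi.smul_apply, smul_eq_mul, Pi.single_apply]
      by_cases hx : x = Fin.last (m+1) <;> simp [hx]
    rw [hsingle, Matrix.det_updateCol_smul, det_updateColumn_single_last] at hD1'
    have hsub : (RL * SL).submatrix (Fin.castSucc : Fin (m+1) → Fin (m+2)) Fin.castSucc
        = K.submatrix
            ((Fin.castSucc : Fin (m+2) → Fin (m+3)) ∘ (Fin.castSucc : Fin (m+1) → Fin (m+2)))
            ((Fin.castSucc : Fin (m+2) → Fin (m+3)) ∘ (Fin.castSucc : Fin (m+1) → Fin (m+2))) := by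
      ext p q
      rw [Matrix.submatrix_apply, Matrix.submatrix_apply, Function.comp_apply,
        Function.comp_apply, key, if_neg]
      · ring
      · intro hcon
        exact absurd hcon.1 (Fin.castSucc_lt_last p).ne
    rw [hsub] at hD1'
    -- det RL > 0
    have hRLtri : RL.BlockTriangular OrderDual.toDual := by
      intro i j hij
      have hij' : i < j := hij
      rw [hRL, Matrix.submatrix_apply]
      rw [Fin.lt_def] at hij'
      rcases Nat.lt_or_ge ((i:ℕ)+1) (j:ℕ) with hc | hc
      · exact hRtri _ _ (Or.inr (by simp [Fin.coe_castSucc]; omega))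
      · apply hRupper0
        · simp [Fin.coe_castSucc]; omega
        · have := j.isLt
          simp [Fin.coe_castSucc]; omega
    have hdetRL : 0 < RL.det := by
      rw [Matrix.det_of_lowerTriangular RL hRLtri]
      apply Finset.prod_pos
      intro i _
      exact hRdiag _
    have hdetSL : 0 ≤ SL.det :=
      hSk (m+2) le_rfl _ _ Fin.strictMono_castSucc Fin.strictMono_castSucc
    have hSvu : 0 < S v u := (hSband u v (by simp [hu, hv])).2
    rw [Matrix.det_mul] at hD1'
    have hRuv := hRnn u v
    rcases lt_or_eq_of_le hRuv with hpos | heq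
    · exfalso
      have h1 : 0 < R u v * S v u * (K.submatrix
          ((Fin.castSucc : Fin (m+2) → Fin (m+3)) ∘ (Fin.castSucc : Fin (m+1) → Fin (m+2)))
          ((Fin.castSucc : Fin (m+2) → Fin (m+3)) ∘ (Fin.castSucc : Fin (m+1) → Fin (m+2)))).det :=
        mul_pos (mul_pos hpos hSvu) hD2
      have h2 : 0 ≤ RL.det * SL.det := mul_nonneg hdetRL.le hdetSL
      linarith
    · exact heq.symm
  -- Step i : the lower corner entry R ⟨1⟩ ⟨0⟩ vanishes
  set z : Fin (m+3) := ⟨0, by omega⟩ with hz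
  set w : Fin (m+3) := ⟨1, by omega⟩ with hww
  have hbeta : R w z = 0 := by
    set RT := R.submatrix (Fin.succ : Fin (m+2) → Fin (m+3)) Fin.succ with hRT
    set ST := S.submatrix (Fin.succ : Fin (m+2) → Fin (m+3)) Fin.succ with hST
    have key : ∀ p q : Fin (m+2),
        K (Fin.succ p) (Fin.succ q) = (RT * ST) p q
          + (if p = 0 ∧ q = 0 then R w z * S z w else 0) := by
      intro p q
      have h1 : K (Fin.succ p) (Fin.succ q)
          = ∑ t : Fin (m+3), R (Fin.succ p) t * S t (Fin.succ q) := by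
        rw [← hRS, Matrix.mul_apply]
      rw [Fin.sum_univ_succ] at h1
      have h2 : (RT * ST) p q
          = ∑ t : Fin (m+2), R (Fin.succ p) (Fin.succ t) * S (Fin.succ t) (Fin.succ q) := by
        rw [Matrix.mul_apply]
        rfl
      rw [h1, h2, add_comm]
      congr 1
      by_cases hp : p = 0
      · by_cases hq : q = 0
        · rw [if_pos ⟨hp, hq⟩, hp, hq]
          congr 1 <;> apply Fin.ext <;> simp [hz, hww]
        · rw [if_neg (fun hcon => hq hcon.2)]
          have hqv : 1 ≤ (q:ℕ) := by
            rcases Nat.eq_zero_or_pos (q:ℕ) with h | h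
            · exact absurd (Fin.ext (by simpa using h)) hq
            · omega
          have : S (0 : Fin (m+3)) (Fin.succ q) = 0 :=
            hStri _ _ (Or.inr (by simp [Fin.val_succ]; omega))
          rw [this, mul_zero]
      · rw [if_neg (fun hcon => hp hcon.1)]
        have hpv : 1 ≤ (p:ℕ) := by
          rcases Nat.eq_zero_or_pos (p:ℕ) with h | h
          · exact absurd (Fin.ext (by simpa using h)) hp
          · omega
        have : R (Fin.succ p) (0 : Fin (m+3)) = 0 :=
          hRtri _ _ (Or.inl (by simp [Fin.val_succ]; omega))
        rw [this, zero_mul]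
    have hKT : K.submatrix (Fin.succ : Fin (m+2) → Fin (m+3)) Fin.succ
        = Matrix.updateCol (RT * ST) 0
            ((fun p => (RT * ST) p 0) + Pi.single (0 : Fin (m+2)) (R w z * S z w)) := by
      ext p q
      rw [Matrix.updateCol_apply]
      by_cases hq : q = 0
      · subst hq
        rw [if_pos rfl, Matrix.submatrix_apply, key]
        simp only [Pi.add_apply, Pi.single_apply]
        congr 1
        by_cases hp : p = 0 <;> simp [hp]
      · rw [if_neg hq, Matrix.submatrix_apply, key, if_neg (fun hcon => hq hcon.2), add_zero]
    have hT1' := hT1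
    rw [hKT, Matrix.det_updateCol_add, Matrix.updateCol_eq_self] at hT1'
    have hsingle : (Pi.single (0 : Fin (m+2)) (R w z * S z w) : Fin (m+2) → ℝ)
        = (R w z * S z w) • (Pi.single (0 : Fin (m+2)) (1:ℝ) : Fin (m+2) → ℝ) := by
      ext x
      simp only [Pi.smul_apply, smul_eq_mul, Pi.single_apply]
      by_cases hx : x = 0 <;> simp [hx]
    rw [hsingle, Matrix.det_updateCol_smul, det_updateColumn_single_zero] at hT1'
    have hsub : (RT * ST).submatrix (Fin.succ : Fin (m+1) → Fin (m+2)) Fin.succ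
        = K.submatrix
            ((Fin.succ : Fin (m+2) → Fin (m+3)) ∘ (Fin.succ : Fin (m+1) → Fin (m+2)))
            ((Fin.succ : Fin (m+2) → Fin (m+3)) ∘ (Fin.succ : Fin (m+1) → Fin (m+2))) := by
      ext p q
      rw [Matrix.submatrix_apply, Matrix.submatrix_apply, Function.comp_apply,
        Function.comp_apply, key, if_neg]
      · ring
      · intro hcon
        exact absurd hcon.1 (Fin.succ_ne_zero p)
    rw [hsub] at hT1'
    have hRTtri : RT.BlockTriangular id := by
      intro i j hij
      have hij' : j < i := hij
      rw [hRT, Matrix.submatrix_apply]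
      rw [Fin.lt_def] at hij'
      rcases Nat.lt_or_ge ((j:ℕ)+1) (i:ℕ) with hc | hc
      · exact hRtri _ _ (Or.inl (by simp [Fin.val_succ]; omega))
      · apply hRlower0
        · simp [Fin.val_succ]; omega
        · simp [Fin.val_succ]
    have hdetRT : 0 < RT.det := by
      rw [Matrix.det_of_upperTriangular hRTtri]
      apply Finset.prod_pos
      intro i _
      exact hRdiag _
    have hdetST : 0 ≤ ST.det :=
      hSk (m+2) le_rfl _ _ Fin.strictMono_succ Fin.strictMono_succ
    have hSzw : 0 < S z w := (hSband z w (by simp [hz, hww])).1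
    rw [Matrix.det_mul] at hT1'
    have hRwz := hRnn w z
    rcases lt_or_eq_of_le hRwz with hpos | heq
    · exfalso
      have h1 : 0 < R w z * S z w * (K.submatrix
          ((Fin.succ : Fin (m+2) → Fin (m+3)) ∘ (Fin.succ : Fin (m+1) → Fin (m+2)))
          ((Fin.succ : Fin (m+2) → Fin (m+3)) ∘ (Fin.succ : Fin (m+1) → Fin (m+2)))).det :=
        mul_pos (mul_pos hpos hSzw) hT2
      have h2 : 0 ≤ RT.det * ST.det := mul_nonneg hdetRT.le hdetST
      linarith
    · exact heq.symm
  -- conclusion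
  intro p q hne
  have hvne : (p:ℕ) ≠ (q:ℕ) := fun h => hne (Fin.ext h)
  rcases Nat.lt_or_ge (p:ℕ) (q:ℕ) with h | h
  · rcases Nat.lt_or_ge ((p:ℕ)+1) (q:ℕ) with hc | hc
    · exact hRtri p q (Or.inr (by omega))
    · have hq : (q:ℕ) = (p:ℕ)+1 := by omega
      rcases Nat.lt_or_ge (q:ℕ) (m+2) with h2 | h2
      · exact hRupper0 p q hq (by omega)
      · have hqv : (q:ℕ) = m+2 := by
          have := q.isLt
          omega
        have hpu : p = u := Fin.ext (by simp [hu]; omega)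
        have hqv' : q = v := Fin.ext (by simp [hv]; omega)
        rw [hpu, hqv']
        exact halpha
  · rcases Nat.lt_or_ge ((q:ℕ)+1) (p:ℕ) with hc | hc
    · exact hRtri p q (Or.inl (by omega))
    · have hp : (p:ℕ) = (q:ℕ)+1 := by omega
      rcases Nat.eq_zero_or_pos (q:ℕ) with h2 | h2
      · have hqz : q = z := Fin.ext (by rw [hz]; exact h2)
        have hpw : p = w := Fin.ext (by simp [hww]; omega)
        rw [hpw, hqz]
        exact hbeta
      · exact hRlower0 p q hp (by omega)

end KgenAux
end part6

open KgenAux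

/-- Minimality of the `K`-generators: in any factorization `R * S = K(a,b)` within
the semigroup of invertible `(n-1)`-nonnegative matrices, one of the two factors
is a diagonal matrix. -/
theorem Kgen_minimality (n : ℕ) (hn : 3 ≤ n) (a b : ℕ → ℝ)
    (ha : ∀ i, i < n - 2 → 0 < a i) (hb : ∀ i, i < n - 1 → 0 < b i)
    (R S : Matrix (Fin n) (Fin n) ℝ) (hR : IsUnit R) (hS : IsUnit S)
    (hRk : IsKNonneg (n - 1) R) (hSk : IsKNonneg (n - 1) S)
    (h : R * S = Kgen n a b) :
    (∀ p q : Fin n, p ≠ q → R p q = 0) ∨ (∀ p q : Fin n, p ≠ q → S p q = 0) := by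
  obtain ⟨m, rfl⟩ : ∃ m, n = m + 3 := ⟨n - 3, by omega⟩
  have e1 : m + 3 - 1 = m + 2 := by omega
  have e2 : m + 3 - 2 = m + 1 := by omega
  rw [e1] at hRk hSk
  rw [e2] at ha
  rw [e1] at hb
  -- positivity facts
  have hbm1 : 0 < b (m+1) := hb (m+1) (by omega)
  have hY : 0 < KgenY (m+3) b := by
    have hYe : KgenY (m+3) b = ∏ x ∈ Finset.range (m+1), b x := by
      simp only [KgenY, e2]
    rw [hYe]
    exact Finset.prod_pos fun i hi => hb i (by
      have := Finset.mem_range.mp hi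
      omega)
  have hA2 : 0 < ∏ x ∈ Finset.range (m+1), a x :=
    Finset.prod_pos fun i hi => ha i (Finset.mem_range.mp hi)
  have hdetK : (Kgen (m+3) a b).det < 0 := by
    rw [Kgen_det_eq]
    have := mul_pos (mul_pos hbm1 hY) hA2
    linarith
  have hK0 : ∀ p q : Fin (m+3), (q:ℕ)+2 ≤ (p:ℕ) ∨ (p:ℕ)+2 ≤ (q:ℕ) →
      Kgen (m+3) a b p q = 0 := fun p q hpq => KE8 hpq
  have hD1 : ((Kgen (m+3) a b).submatrix Fin.castSucc Fin.castSucc).det = 0 := Kgen_D1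
  have hD2 : 0 < ((Kgen (m+3) a b).submatrix
      ((Fin.castSucc : Fin (m+2) → Fin (m+3)) ∘ (Fin.castSucc : Fin (m+1) → Fin (m+2)))
      ((Fin.castSucc : Fin (m+2) → Fin (m+3)) ∘ (Fin.castSucc : Fin (m+1) → Fin (m+2)))).det := by
    rw [Kgen_D2]
    exact hA2
  have hT1 : ((Kgen (m+3) a b).submatrix (Fin.succ : Fin (m+2) → Fin (m+3)) Fin.succ).det = 0 :=
    Kgen_T1
  have hT2 : 0 < ((Kgen (m+3) a b).submatrix
      ((Fin.succ : Fin (m+2) → Fin (m+3)) ∘ (Fin.succ : Fin (m+1) → Fin (m+2)))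
      ((Fin.succ : Fin (m+2) → Fin (m+3)) ∘ (Fin.succ : Fin (m+1) → Fin (m+2)))).det := by
    rw [Kgen_T2]
    have h1 : 0 < ∏ l ∈ Finset.Ico 1 (m+1), b l :=
      Finset.prod_pos fun i hi => hb i (by
        have := (Finset.mem_Ico.mp hi).2
        omega)
    have h2 : 0 < ∏ l ∈ Finset.Ico 1 (m+1), a l :=
      Finset.prod_pos fun i hi => ha i (by
        have := (Finset.mem_Ico.mp hi).2
        omega)
    positivity
  have hdetRS : R.det * S.det = (Kgen (m+3) a b).det := by
    rw [← Matrix.det_mul, h]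
  rcases lt_trichotomy S.det 0 with hS0 | hS0 | hS0
  · left
    exact core m (Kgen (m+3) a b) R S hR hS hRk hSk h hS0 hK0 hD1 hD2 hT1 hT2
  · exact absurd hS0 ((Matrix.isUnit_iff_isUnit_det S).mp hS).ne_zero
  · right
    have hR0 : R.det < 0 := by
      by_contra hcon
      push_neg at hcon
      have := mul_nonneg hcon hS0.le
      rw [hdetRS] at this
      linarith
    have htrans : Sᵀ * Rᵀ = (Kgen (m+3) a b)ᵀ := by
      rw [← Matrix.transpose_mul, h]
    have hRt : IsUnit Rᵀ := (Matrix.isUnit_iff_isUnit_det Rᵀ).mpr (by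
      rw [Matrix.det_transpose]
      exact (Matrix.isUnit_iff_isUnit_det R).mp hR)
    have hSt : IsUnit Sᵀ := (Matrix.isUnit_iff_isUnit_det Sᵀ).mpr (by
      rw [Matrix.det_transpose]
      exact (Matrix.isUnit_iff_isUnit_det S).mp hS)
    have hdetRt : Rᵀ.det < 0 := by rw [Matrix.det_transpose]; exact hR0
    have hK0t : ∀ p q : Fin (m+3), (q:ℕ)+2 ≤ (p:ℕ) ∨ (p:ℕ)+2 ≤ (q:ℕ) →
        (Kgen (m+3) a b)ᵀ p q = 0 := fun p q hpq => hK0 q p hpq.symm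
    have hsubt : ∀ {k : ℕ} (f : Fin k → Fin (m+3)),
        ((Kgen (m+3) a b)ᵀ.submatrix f f) = ((Kgen (m+3) a b).submatrix f f)ᵀ := by
      intro k f
      ext p q
      rfl
    have hD1t : ((Kgen (m+3) a b)ᵀ.submatrix Fin.castSucc Fin.castSucc).det = 0 := by
      rw [hsubt, Matrix.det_transpose]
      exact hD1
    have hD2t : 0 < ((Kgen (m+3) a b)ᵀ.submatrix
        ((Fin.castSucc : Fin (m+2) → Fin (m+3)) ∘ (Fin.castSucc : Fin (m+1) → Fin (m+2)))
        ((Fin.castSucc : Fin (m+2) → Fin (m+3)) ∘ (Fin.castSucc : Fin (m+1) → Fin (m+2)))).det := by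
      rw [hsubt, Matrix.det_transpose]
      exact hD2
    have hT1t : ((Kgen (m+3) a b)ᵀ.submatrix (Fin.succ : Fin (m+2) → Fin (m+3)) Fin.succ).det
        = 0 := by
      rw [hsubt, Matrix.det_transpose]
      exact hT1
    have hT2t : 0 < ((Kgen (m+3) a b)ᵀ.submatrix
        ((Fin.succ : Fin (m+2) → Fin (m+3)) ∘ (Fin.succ : Fin (m+1) → Fin (m+2)))
        ((Fin.succ : Fin (m+2) → Fin (m+3)) ∘ (Fin.succ : Fin (m+1) → Fin (m+2)))).det := by
      rw [hsubt, Matrix.det_transpose]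
      exact hT2
    have hcore := core m ((Kgen (m+3) a b)ᵀ) Sᵀ Rᵀ hSt hRt
      (isKNonneg_transpose hSk) (isKNonneg_transpose hRk) htrans hdetRt
      hK0t hD1t hD2t hT1t hT2t
    intro p q hpq
    have := hcore q p (fun hc => hpq (hc.symm ▸ rfl))
    exact this
end

section
/- Let n ≥ 3 and let K(A,B) and K(C,D) be K-generators with positive parameter vectors (A,B) and (C,D) respectively. Then the product K(A,B)·K(C,D) is totally nonnegative (all of its minors, of every order, are nonnegative). -/
open Matrix

open Matrix Finset

namespace KP






lemma strictMono_add_le {m n : ℕ} {I : Fin m → Fin n} (hI : StrictMono I) :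
    ∀ (d : ℕ) (k : Fin m) (hkd : (k : ℕ) + d < m), (I k : ℕ) + d ≤ I ⟨(k : ℕ) + d, hkd⟩ := by
  intro d
  induction d with
  | zero => intro k hkd; simp
  | succ d ih =>
    intro k hkd
    have hkd' : (k : ℕ) + d < m := by omega
    have h1 := ih k hkd'
    have h2 : I ⟨(k : ℕ) + d, hkd'⟩ < I ⟨(k : ℕ) + (d + 1), hkd⟩ := by
      apply hI; simp [Fin.lt_def]
    have h2n : ((I ⟨(k : ℕ) + d, hkd'⟩ : Fin n) : ℕ) < ((I ⟨(k : ℕ) + (d + 1), hkd⟩ : Fin n) : ℕ) := h2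
    omega

lemma strictMono_le' {m n : ℕ} {I : Fin (m+1) → Fin n} (hI : StrictMono I) (k : Fin (m+1)) :
    (I 0 : ℕ) + (k : ℕ) ≤ (I k : ℕ) := by
  have := strictMono_add_le hI (k : ℕ) 0 (by have := k.isLt; simp; omega)
  have e : (⟨((0 : Fin (m+1)) : ℕ) + (k : ℕ), by have := k.isLt; simp; omega⟩ : Fin (m+1)) = k := by
    ext; simp
  rw [e] at this; exact this

/-- expansion when row 0 has support only in column 0 -/
lemma det_row_support0 {m : ℕ} (M : Matrix (Fin (m+1)) (Fin (m+1)) ℝ)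
    (h : ∀ j : Fin (m+1), j ≠ 0 → M 0 j = 0) :
    M.det = M 0 0 * (M.submatrix Fin.succ Fin.succ).det := by
  rw [det_succ_row_zero, Fin.sum_univ_succ]
  have h2 : ∀ j : Fin m, (-1 : ℝ) ^ ((j.succ : Fin (m+1)) : ℕ) * M 0 j.succ *
      (M.submatrix Fin.succ (Fin.succAbove j.succ)).det = 0 := by
    intro j; rw [h j.succ (Fin.succ_ne_zero j)]; ring
  rw [Finset.sum_eq_zero fun j _ => h2 j]
  simp [Fin.succAbove_zero]

lemma det_col_support0 {m : ℕ} (M : Matrix (Fin (m+1)) (Fin (m+1)) ℝ)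
    (h : ∀ i : Fin (m+1), i ≠ 0 → M i 0 = 0) :
    M.det = M 0 0 * (M.submatrix Fin.succ Fin.succ).det := by
  rw [det_succ_column_zero, Fin.sum_univ_succ]
  have h2 : ∀ i : Fin m, (-1 : ℝ) ^ ((i.succ : Fin (m+1)) : ℕ) * M i.succ 0 *
      (M.submatrix (Fin.succAbove i.succ) Fin.succ).det = 0 := by
    intro i; rw [h i.succ (Fin.succ_ne_zero i)]; ring
  rw [Finset.sum_eq_zero fun i _ => h2 i]
  simp [Fin.succAbove_zero]

/-- Every minor of a lower-bidiagonal matrix with nonnegative entries is nonnegative. -/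
lemma lowerBidiag_minor_nonneg {n : ℕ} (A : Matrix (Fin n) (Fin n) ℝ)
    (h0 : ∀ p q, 0 ≤ A p q)
    (hz : ∀ p q : Fin n, (q : ℕ) ≠ (p : ℕ) → (q : ℕ) + 1 ≠ (p : ℕ) → A p q = 0) :
    ∀ (m : ℕ) (I J : Fin m → Fin n), StrictMono I → StrictMono J →
      0 ≤ (A.submatrix I J).det := by
  intro m
  induction m with
  | zero => intro I J _ _; simp [det_fin_zero]
  | succ m ih =>
    intro I J hI hJ
    have tail : 0 ≤ ((A.submatrix I J).submatrix Fin.succ Fin.succ).det := by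
      rw [submatrix_submatrix]
      exact ih _ _ (hI.comp Fin.strictMono_succ) (hJ.comp Fin.strictMono_succ)
    rcases lt_trichotomy ((J 0 : ℕ)) ((I 0 : ℕ)) with h | h | h
    · rcases Nat.lt_or_ge ((J 0 : ℕ) + 1) ((I 0 : ℕ)) with h' | h'
      · -- column 0 is zero
        rw [det_eq_zero_of_column_eq_zero 0]
        intro i
        have : (I 0 : ℕ) ≤ (I i : ℕ) := by
          have := strictMono_le' hI i; omega
        exact hz _ _ (by omega) (by omega)
      · -- J 0 + 1 = I 0 : single entry in column 0
        have he : (J 0 : ℕ) + 1 = (I 0 : ℕ) := by omega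
        rw [det_col_support0]
        · exact mul_nonneg (h0 _ _) tail
        · intro i hi
          have hil : (0 : Fin (m+1)) < i := by
            rcases Fin.eq_zero_or_eq_succ i with rfl | ⟨j, rfl⟩
            · exact absurd rfl hi
            · exact Fin.succ_pos j
          have : (I 0 : ℕ) < (I i : ℕ) := hI hil
          exact hz _ _ (by omega) (by omega)
    · -- J 0 = I 0 : single entry in row 0
      rw [det_row_support0]
      · exact mul_nonneg (h0 _ _) tail
      · intro j hj
        have hjl : (0 : Fin (m+1)) < j := by
          rcases Fin.eq_zero_or_eq_succ j with rfl | ⟨i, rfl⟩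
          · exact absurd rfl hj
          · exact Fin.succ_pos i
        have : (J 0 : ℕ) < (J j : ℕ) := hJ hjl
        exact hz _ _ (by omega) (by omega)
    · -- row 0 is zero
      rw [det_eq_zero_of_row_eq_zero 0]
      intro j
      have : (J 0 : ℕ) ≤ (J j : ℕ) := by
        have := strictMono_le' hJ j; omega
      exact hz _ _ (by omega) (by omega)

lemma upperBidiag_minor_nonneg {n : ℕ} (A : Matrix (Fin n) (Fin n) ℝ)
    (h0 : ∀ p q, 0 ≤ A p q)
    (hz : ∀ p q : Fin n, (q : ℕ) ≠ (p : ℕ) → (p : ℕ) + 1 ≠ (q : ℕ) → A p q = 0) :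
    ∀ (m : ℕ) (I J : Fin m → Fin n), StrictMono I → StrictMono J →
      0 ≤ (A.submatrix I J).det := by
  intro m I J hI hJ
  have := lowerBidiag_minor_nonneg Aᵀ (fun p q => h0 q p)
    (fun p q h1 h2 => hz q p (Ne.symm h1) h2) m J I hJ hI
  rwa [← Matrix.det_transpose, transpose_submatrix] at this








section CB

variable {m n : ℕ}

lemma submatrix_mul_submatrix (A B : Matrix (Fin n) (Fin n) ℝ) (I J : Fin m → Fin n) :
    (A * B).submatrix I J = (A.submatrix I id) * (B.submatrix id J) := by
  ext i j; simp [mul_apply]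

def imset (p : Fin m → Fin n) : Finset (Fin n) := Finset.univ.image p

lemma imset_card {p : Fin m → Fin n} (hp : Function.Injective p) : (imset p).card = m := by
  rw [imset, Finset.card_image_of_injective _ hp, Finset.card_univ, Fintype.card_fin]

noncomputable def monoOf (p : Fin m → Fin n) (hp : Function.Injective p) : Fin m → Fin n :=
  (imset p).orderEmbOfFin (imset_card hp)

lemma monoOf_strictMono (p : Fin m → Fin n) (hp : Function.Injective p) :
    StrictMono (monoOf p hp) := (Finset.orderEmbOfFin _ _).strictMono

noncomputable def permOf (p : Fin m → Fin n) (hp : Function.Injective p) :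
    Equiv.Perm (Fin m) :=
  (Equiv.ofBijective (fun i => (⟨p i, by simp [imset]⟩ : {x // x ∈ imset p}))
    (by
      refine (Fintype.bijective_iff_injective_and_card _).mpr ⟨?_, ?_⟩
      · intro i j hij
        exact hp (congrArg Subtype.val hij)
      · simp [Fintype.card_coe, imset_card hp])).trans
  ((imset p).orderIsoOfFin (imset_card hp)).toEquiv.symm

lemma monoOf_permOf (p : Fin m → Fin n) (hp : Function.Injective p) (i : Fin m) :
    monoOf p hp (permOf p hp i) = p i := by
  show (imset p).orderEmbOfFin (imset_card hp)
      (((imset p).orderIsoOfFin (imset_card hp)).toEquiv.symm ⟨p i, by simp [imset]⟩) = p i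
  rw [← Finset.coe_orderIsoOfFin_apply]
  simp

theorem det_mul_sum_strictMono (A : Matrix (Fin m) (Fin n) ℝ) (B : Matrix (Fin n) (Fin m) ℝ) :
    (A * B).det = ∑ g ∈ Finset.univ.filter (fun g : Fin m → Fin n => StrictMono g),
      (A.submatrix id g).det * (B.submatrix g id).det := by
  classical
  calc (A * B).det
      = ∑ p : Fin m → Fin n, ∑ σ : Equiv.Perm (Fin m),
          ((Equiv.Perm.sign σ : ℤ) : ℝ) * ∏ i, A (σ i) (p i) * B (p i) i := by
        simp only [det_apply', mul_apply, Finset.prod_univ_sum, Finset.mul_sum,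
          Fintype.piFinset_univ]
        rw [Finset.sum_comm]
    _ = ∑ p : Fin m → Fin n, (A.submatrix id p).det * ∏ i, B (p i) i := by
        refine Finset.sum_congr rfl fun p _ => ?_
        rw [det_apply', Finset.sum_mul]
        refine Finset.sum_congr rfl fun σ _ => ?_
        rw [Finset.prod_mul_distrib]
        simp only [submatrix_apply, id_eq]
        ring
    _ = ∑ p ∈ Finset.univ.filter (fun p : Fin m → Fin n => Function.Injective p),
          (A.submatrix id p).det * ∏ i, B (p i) i := by
        symm
        apply Finset.sum_subset (Finset.filter_subset _ _)
        intro p _ hp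
        have hni : ¬ Function.Injective p := by simpa using hp
        obtain ⟨i, j, hpij, hij⟩ := Function.not_injective_iff.mp hni
        have hz : (A.submatrix id p).det = 0 := by
          apply det_zero_of_column_eq hij
          intro k; simp [hpij]
        rw [hz, zero_mul]
    _ = ∑ q ∈ (Finset.univ.filter (fun g : Fin m → Fin n => StrictMono g)) ×ˢ
          (Finset.univ : Finset (Equiv.Perm (Fin m))),
          ((Equiv.Perm.sign q.2 : ℤ) : ℝ) * (A.submatrix id q.1).det
            * ∏ i, B (q.1 (q.2 i)) i := by
        refine Finset.sum_bij'
          (fun p hp => (monoOf p (by simpa using hp), permOf p (by simpa using hp)))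
          (fun q _ => q.1 ∘ q.2) ?_ ?_ ?_ ?_ ?_
        · intro p hp
          simp only [Finset.mem_product, Finset.mem_filter, Finset.mem_univ, true_and]
          exact ⟨monoOf_strictMono _ _, trivial⟩
        · intro q hq
          simp only [Finset.mem_product, Finset.mem_filter, Finset.mem_univ, true_and] at hq ⊢
          exact hq.1.injective.comp q.2.injective
        · intro p hp
          funext i
          exact monoOf_permOf p (by simpa using hp) i
        · rintro ⟨g, σ⟩ hq
          simp only [Finset.mem_product, Finset.mem_filter, Finset.mem_univ, true_and] at hq
          have hginj : Function.Injective g := hq.1.injective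
          have hpinj : Function.Injective (g ∘ σ) := hginj.comp σ.injective
          have him : imset (g ∘ σ) = imset g := by
            ext x
            simp only [imset, Finset.mem_image, Finset.mem_univ, true_and, Function.comp_apply]
            constructor
            · rintro ⟨i, rfl⟩; exact ⟨σ i, rfl⟩
            · rintro ⟨i, rfl⟩; exact ⟨σ.symm i, by simp⟩
          have hg : monoOf (g ∘ σ) hpinj = g := by
            have := Finset.orderEmbOfFin_unique (f := g) (imset_card hpinj)
              (fun x => by rw [him]; simp [imset]) hq.1
            exact this.symm
          have hσ : permOf (g ∘ σ) hpinj = σ := by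
            apply Equiv.ext
            intro i
            apply hq.1.injective
            have h1 : g (permOf (g ∘ σ) hpinj i) = monoOf (g ∘ σ) hpinj (permOf (g ∘ σ) hpinj i) := by
              rw [hg]
            rw [h1, monoOf_permOf]
            rfl
          show (monoOf (g ∘ σ) _, permOf (g ∘ σ) _) = (g, σ)
          rw [show monoOf (g ∘ σ) _ = g from hg, show permOf (g ∘ σ) _ = σ from hσ]
        · intro p hp
          have hpinj : Function.Injective p := by simpa using hp
          have hfac : ∀ i, p i = monoOf p hpinj (permOf p hpinj i) :=
            fun i => (monoOf_permOf p hpinj i).symm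
          have h1 : (A.submatrix id p).det
              = ((Equiv.Perm.sign (permOf p hpinj) : ℤ) : ℝ)
                * (A.submatrix id (monoOf p hpinj)).det := by
            have heq : A.submatrix id p
                = (A.submatrix id (monoOf p hpinj)).submatrix id (permOf p hpinj) := by
              ext i j
              simp only [submatrix_apply, id_eq]
              rw [hfac]
            rw [heq, det_permute']
          have h2 : ∏ i, B (p i) i = ∏ i, B (monoOf p hpinj (permOf p hpinj i)) i := by
            refine Finset.prod_congr rfl fun i _ => by rw [← hfac]
          rw [h1, h2]
    _ = ∑ g ∈ Finset.univ.filter (fun g : Fin m → Fin n => StrictMono g),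
          (A.submatrix id g).det * (B.submatrix g id).det := by
        rw [Finset.sum_product]
        refine Finset.sum_congr rfl fun g _ => ?_
        rw [det_apply' (B.submatrix g id), Finset.mul_sum]
        refine Finset.sum_congr rfl fun σ _ => ?_
        simp only [submatrix_apply, id_eq]
        ring

end CB


section Tridiag

def lowEquiv (m s : ℕ) (hs : s ≤ m) : Fin s ≃ {k : Fin m // (k : ℕ) < s} where
  toFun j := ⟨⟨j, lt_of_lt_of_le j.isLt hs⟩, j.isLt⟩
  invFun k := ⟨(k.1 : ℕ), k.2⟩
  left_inv j := rfl
  right_inv k := rfl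

def highEquiv (m s : ℕ) (hs : s ≤ m) : Fin (m - s) ≃ {k : Fin m // ¬ (k : ℕ) < s} where
  toFun j := ⟨⟨s + j, by have := j.isLt; omega⟩, by simp⟩
  invFun k := ⟨(k.1 : ℕ) - s, by have := k.1.isLt; have := k.2; omega⟩
  left_inv j := by ext; simp
  right_inv k := by
    have h2 := k.2
    ext
    simp only [Fin.val_mk]
    omega

theorem tridiag_minor_nonneg {n : ℕ} (A : Matrix (Fin n) (Fin n) ℝ)
    (h0 : ∀ p q, 0 ≤ A p q)
    (htri : ∀ p q : Fin n, (p : ℕ) + 2 ≤ (q : ℕ) ∨ (q : ℕ) + 2 ≤ (p : ℕ) → A p q = 0)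
    (m0 : ℕ)
    (hprin : ∀ (len i0 : ℕ), len ≤ m0 → ∀ f : Fin len → Fin n,
      (∀ k : Fin len, (f k : ℕ) = i0 + (k : ℕ)) → 0 ≤ (A.submatrix f f).det) :
    ∀ m, m ≤ m0 → ∀ I J : Fin m → Fin n, StrictMono I → StrictMono J →
      0 ≤ (A.submatrix I J).det := by
  classical
  intro m
  induction m using Nat.strong_induction_on with
  | _ m IH =>
    match m with
    | 0 => intro _ I J _ _; simp [det_fin_zero]
    | Nat.succ m =>
      intro hm I J hI hJ
      have tail : 0 ≤ ((A.submatrix I J).submatrix Fin.succ Fin.succ).det := by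
        rw [submatrix_submatrix]
        exact IH m (Nat.lt_succ_self m) (by omega) _ _
          (hI.comp Fin.strictMono_succ) (hJ.comp Fin.strictMono_succ)
      rcases lt_trichotomy ((I 0 : ℕ)) ((J 0 : ℕ)) with h | h | h
      · rcases Nat.lt_or_ge ((I 0 : ℕ) + 1) ((J 0 : ℕ)) with h' | h'
        · -- J 0 ≥ I 0 + 2 : row 0 zero
          have hz : (A.submatrix I J).det = 0 := by
            apply det_eq_zero_of_row_eq_zero 0
            intro j
            have := strictMono_le' hJ j
            exact htri _ _ (by omega)
          rw [hz]
        · -- J 0 = I 0 + 1 : single entry in row 0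
          rw [det_row_support0]
          · exact mul_nonneg (h0 _ _) tail
          · intro j hj
            have hjl : (0 : Fin (m + 1)) < j := Fin.pos_of_ne_zero hj
            have : (J 0 : ℕ) < (J j : ℕ) := hJ hjl
            exact htri _ _ (by omega)
      · -- I 0 = J 0 : run analysis
        set i₀ : ℕ := (I 0 : ℕ) with hi₀
        set P : ℕ → Prop := fun t => ∀ p : Fin (m + 1), (p : ℕ) < t →
          (I p : ℕ) = i₀ + (p : ℕ) ∧ (J p : ℕ) = i₀ + (p : ℕ) with hPdef
        have hP1 : P 1 := by
          intro p hp
          have hp0 : p = 0 := by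
            ext; rw [Fin.val_zero]; omega
          subst hp0
          constructor
          · simp [hi₀]
          · simp [hi₀, ← h]
        obtain ⟨s, hs1, hsm, hPs, hmax⟩ :
            ∃ s, 1 ≤ s ∧ s ≤ m + 1 ∧ P s ∧ (s < m + 1 → ¬ P (s + 1)) := by
          refine ⟨Nat.findGreatest P (m + 1), Nat.le_findGreatest (by omega) hP1,
            Nat.findGreatest_le _, Nat.findGreatest_spec (by omega) hP1, fun hlt =>
            Nat.findGreatest_is_greatest (n := m + 1)
              (k := Nat.findGreatest P (m + 1) + 1) (by omega) (by omega)⟩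
        rcases Nat.lt_or_ge s (m + 1) with hslt | hsge
        · -- proper split at position s
          have hfail : ¬ P (s + 1) := hmax hslt
          have hpsv : ((⟨s, hslt⟩ : Fin (m + 1)) : ℕ) = s := rfl
          have hIlow : i₀ + s ≤ (I ⟨s, hslt⟩ : ℕ) := by
            have := strictMono_le' hI ⟨s, hslt⟩
            omega
          have hJlow : i₀ + s ≤ (J ⟨s, hslt⟩ : ℕ) := by
            have := strictMono_le' hJ ⟨s, hslt⟩
            omega
          have hdisj : (i₀ + s + 1 ≤ (I ⟨s, hslt⟩ : ℕ)) ∨ (i₀ + s + 1 ≤ (J ⟨s, hslt⟩ : ℕ)) := by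
            by_contra hc
            push_neg at hc
            apply hfail
            intro p hp
            rcases Nat.lt_or_ge (p : ℕ) s with hps' | hps'
            · exact hPs p hps'
            · have hp_eq : p = ⟨s, hslt⟩ := by ext; omega
              subst hp_eq
              omega
          have hIJrun : ∀ k : Fin (m + 1), (k : ℕ) < s →
              (I k : ℕ) = i₀ + (k : ℕ) ∧ (J k : ℕ) = i₀ + (k : ℕ) := hPs
          set M := A.submatrix I J with hM
          set p : Fin (m + 1) → Prop := fun k => (k : ℕ) < s with hpdef
          have hblock1 : 0 ≤ (toSquareBlockProp M p).det := by
            rw [← det_submatrix_equiv_self (lowEquiv (m + 1) s hsm)]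
            have hrw : (toSquareBlockProp M p).submatrix (lowEquiv (m + 1) s hsm)
                (lowEquiv (m + 1) s hsm)
                = A.submatrix (fun j : Fin s => I ⟨(j : ℕ), lt_of_lt_of_le j.isLt hsm⟩)
                  (fun j : Fin s => I ⟨(j : ℕ), lt_of_lt_of_le j.isLt hsm⟩) := by
              ext i j
              have hJI : J ⟨(j : ℕ), lt_of_lt_of_le j.isLt hsm⟩
                  = I ⟨(j : ℕ), lt_of_lt_of_le j.isLt hsm⟩ := by
                have h1 := (hIJrun ⟨(j : ℕ), lt_of_lt_of_le j.isLt hsm⟩ j.isLt).1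
                have h2 := (hIJrun ⟨(j : ℕ), lt_of_lt_of_le j.isLt hsm⟩ j.isLt).2
                ext
                omega
              simp [toSquareBlockProp, toBlock, lowEquiv, hM, hJI]
            rw [hrw]
            refine hprin s i₀ (by omega) _ ?_
            intro k
            exact (hIJrun ⟨(k : ℕ), lt_of_lt_of_le k.isLt hsm⟩ k.isLt).1
          have hblock2 : 0 ≤ (toSquareBlockProp M fun k => ¬ p k).det := by
            rw [← det_submatrix_equiv_self (highEquiv (m + 1) s hsm)]
            have hrw : (toSquareBlockProp M (fun k => ¬ p k)).submatrix
                (highEquiv (m + 1) s hsm) (highEquiv (m + 1) s hsm)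
                = A.submatrix
                  (fun j : Fin (m + 1 - s) => I ⟨s + (j : ℕ), by have := j.isLt; omega⟩)
                  (fun j : Fin (m + 1 - s) => J ⟨s + (j : ℕ), by have := j.isLt; omega⟩) := by
              ext i j
              simp [toSquareBlockProp, toBlock, highEquiv, hM]
            rw [hrw]
            have hmono : StrictMono (fun j : Fin (m + 1 - s) =>
                (⟨s + (j : ℕ), by have := j.isLt; omega⟩ : Fin (m + 1))) := by
              intro a b hab
              simp only [Fin.lt_def]
              have : (a : ℕ) < (b : ℕ) := hab
              omega
            exact IH (m + 1 - s) (by omega) (by omega) _ _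
              (hI.comp hmono) (hJ.comp hmono)
          rcases hdisj with hIbig | hJbig
          · -- lower-left block of M is zero
            have hsplit := Matrix.twoBlockTriangular_det M p ?_
            · rw [hsplit]
              exact mul_nonneg hblock1 hblock2
            · intro i hi j hj
              simp only [hpdef, not_lt] at hi hj
              have hIi : (I ⟨s, hslt⟩ : ℕ) ≤ (I i : ℕ) := by
                rcases Nat.eq_or_lt_of_le hi with he | hl
                · have hieq : i = ⟨s, hslt⟩ := by ext; omega
                  rw [hieq]
                · have hlt : (⟨s, hslt⟩ : Fin (m + 1)) < i := by
                    rw [Fin.lt_def]; omega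
                  exact le_of_lt (hI hlt)
              have hJj : (J j : ℕ) = i₀ + (j : ℕ) := (hIJrun j hj).2
              refine htri _ _ (Or.inr ?_)
              omega
          · -- upper-right block of M is zero
            have hsplit := Matrix.twoBlockTriangular_det' M p ?_
            · rw [hsplit]
              exact mul_nonneg hblock1 hblock2
            · intro i hi j hj
              simp only [hpdef, not_lt] at hi hj
              have hJj : (J ⟨s, hslt⟩ : ℕ) ≤ (J j : ℕ) := by
                rcases Nat.eq_or_lt_of_le hj with he | hl
                · have hjeq : j = ⟨s, hslt⟩ := by ext; omega
                  rw [hjeq]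
                · have hlt : (⟨s, hslt⟩ : Fin (m + 1)) < j := by
                    rw [Fin.lt_def]; omega
                  exact le_of_lt (hJ hlt)
              have hIi : (I i : ℕ) = i₀ + (i : ℕ) := (hIJrun i hi).1
              refine htri _ _ (Or.inl ?_)
              omega
        · -- s = m + 1 : full interval, principal contiguous minor
          have hJI : J = I := by
            funext k
            have h1 := (hPs k (by omega)).1
            have h2 := (hPs k (by omega)).2
            ext
            omega
          rw [hJI]
          refine hprin (m + 1) i₀ hm I ?_
          intro k
          exact (hPs k (by omega)).1
      · rcases Nat.lt_or_ge ((J 0 : ℕ) + 1) ((I 0 : ℕ)) with h' | h'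
        · -- I 0 ≥ J 0 + 2 : column 0 zero
          have hz : (A.submatrix I J).det = 0 := by
            apply det_eq_zero_of_column_eq_zero 0
            intro i
            have := strictMono_le' hI i
            exact htri _ _ (by omega)
          rw [hz]
        · -- I 0 = J 0 + 1 : single entry in column 0
          rw [det_col_support0]
          · exact mul_nonneg (h0 _ _) tail
          · intro i hi
            have hil : (0 : Fin (m + 1)) < i := Fin.pos_of_ne_zero hi
            have : (I 0 : ℕ) < (I i : ℕ) := hI hil
            exact htri _ _ (by omega)

end Tridiag

end KP
section KgenEntries

variable {n : ℕ} {a b : ℕ → ℝ}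

lemma Kgen_corner (hn : 3 ≤ n) {p q : Fin n} (hp : (p : ℕ) + 1 = n) (hq : (q : ℕ) + 1 = n) :
    Kgen n a b p q = b (n - 2) * KgenX n a b := by
  unfold Kgen; rw [if_pos ⟨hp, hq⟩]

lemma Kgen_dlast (hn : 3 ≤ n) {p q : Fin n} (hp : (p : ℕ) + 2 = n) (hq : (q : ℕ) + 2 = n) :
    Kgen n a b p q = b (n - 3) := by
  unfold Kgen; rw [if_neg (by omega), if_pos ⟨hp, hq⟩]

lemma Kgen_d0 (hn : 3 ≤ n) {p q : Fin n} (hp : (p : ℕ) = 0) (hq : (q : ℕ) = 0) :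
    Kgen n a b p q = a 0 := by
  unfold Kgen; rw [if_neg (by omega), if_neg (by omega), if_pos ⟨by omega, hp⟩]

lemma Kgen_diag (hn : 3 ≤ n) {p q : Fin n} (hpq : (p : ℕ) = (q : ℕ)) (h1 : 1 ≤ (p : ℕ))
    (h2 : (p : ℕ) + 3 ≤ n) :
    Kgen n a b p q = a p + b ((p : ℕ) - 1) := by
  unfold Kgen; rw [if_neg (by omega), if_neg (by omega), if_neg (by omega), if_pos hpq]

lemma Kgen_super (hn : 3 ≤ n) {p q : Fin n} (hpq : (q : ℕ) = (p : ℕ) + 1)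
    (h2 : (p : ℕ) + 3 ≤ n) :
    Kgen n a b p q = a p * b p := by
  unfold Kgen
  rw [if_neg (by omega), if_neg (by omega), if_neg (by omega), if_neg (by omega),
    if_neg (by omega), if_pos hpq]

lemma Kgen_Y (hn : 3 ≤ n) {p q : Fin n} (hp : (p : ℕ) + 2 = n) (hq : (q : ℕ) + 1 = n) :
    Kgen n a b p q = b (n - 2) * KgenY n b := by
  unfold Kgen
  rw [if_neg (by omega), if_neg (by omega), if_neg (by omega), if_neg (by omega),
    if_pos ⟨hp, hq⟩]

lemma Kgen_sub (hn : 3 ≤ n) {p q : Fin n} (hpq : (p : ℕ) = (q : ℕ) + 1) :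
    Kgen n a b p q = 1 := by
  have hpn := p.isLt
  unfold Kgen
  rw [if_neg (by omega), if_neg (by omega), if_neg (by omega), if_neg (by omega),
    if_neg (by omega), if_neg (by omega), if_pos hpq]

lemma Kgen_zero (hn : 3 ≤ n) {p q : Fin n}
    (h : (p : ℕ) + 2 ≤ (q : ℕ) ∨ (q : ℕ) + 2 ≤ (p : ℕ)) :
    Kgen n a b p q = 0 := by
  have hpn := p.isLt
  have hqn := q.isLt
  unfold Kgen
  rw [if_neg (by omega), if_neg (by omega), if_neg (by omega), if_neg (by omega),
    if_neg (by omega), if_neg (by omega), if_neg (by omega)]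

end KgenEntries

namespace KP


section KgenPos

variable {n : ℕ} {a b : ℕ → ℝ}

lemma KgenX_pos (hn : 3 ≤ n) (ha : ∀ i, i < n - 2 → 0 < a i) (hb : ∀ i, i < n - 1 → 0 < b i) :
    0 < KgenX n a b := by
  unfold KgenX
  apply Finset.sum_pos
  · intro k hk
    rw [Finset.mem_range] at hk
    apply mul_pos
    · apply Finset.prod_pos
      intro t ht
      rw [Finset.mem_range] at ht
      exact hb t (by omega)
    · apply Finset.prod_pos
      intro t ht
      rw [Finset.mem_Ico] at ht
      exact ha t (by omega)
  · exact ⟨0, Finset.mem_range.mpr (by omega)⟩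

lemma KgenY_pos (hn : 3 ≤ n) (hb : ∀ i, i < n - 1 → 0 < b i) : 0 < KgenY n b := by
  unfold KgenY
  apply Finset.prod_pos
  intro t ht
  rw [Finset.mem_range] at ht
  exact hb t (by omega)

lemma Kgen_nonneg (hn : 3 ≤ n) (ha : ∀ i, i < n - 2 → 0 < a i) (hb : ∀ i, i < n - 1 → 0 < b i)
    (p q : Fin n) : 0 ≤ Kgen n a b p q := by
  have hpn := p.isLt
  have hqn := q.isLt
  have hX := KgenX_pos hn ha hb
  have hY := KgenY_pos hn hb
  unfold Kgen
  split_ifs with h1 h2 h3 h4 h5 h6 h7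
  · exact mul_nonneg (hb _ (by omega)).le hX.le
  · exact (hb _ (by omega)).le
  · exact (ha _ (by omega)).le
  · have hp1 : 1 ≤ (p : ℕ) := by omega
    have hp2 : (p : ℕ) + 3 ≤ n := by omega
    exact add_nonneg (ha _ (by omega)).le (hb _ (by omega)).le
  · exact mul_nonneg (hb _ (by omega)).le hY.le
  · have : (p : ℕ) + 3 ≤ n := by omega
    exact mul_nonneg (ha _ (by omega)).le (hb _ (by omega)).le
  · exact zero_le_one
  · exact le_refl 0
  
end KgenPos




section Bidiag

variable (n : ℕ) (a b : ℕ → ℝ)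

noncomputable def Klo : Matrix (Fin n) (Fin n) ℝ := fun p q =>
  if (p : ℕ) = (q : ℕ) then (if (p : ℕ) < n - 2 then a p else 0)
  else if (p : ℕ) = (q : ℕ) + 1 then 1 else 0

noncomputable def Kup : Matrix (Fin n) (Fin n) ℝ := fun p q =>
  if (p : ℕ) = (q : ℕ) then 1 else if (q : ℕ) = (p : ℕ) + 1 then b p else 0

variable {n a b}

lemma Klo_nonneg (ha : ∀ i, i < n - 2 → 0 < a i) (p q : Fin n) : 0 ≤ Klo n a p q := by
  unfold Klo
  split_ifs with h1 h2 h3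
  · exact (ha _ h2).le
  · exact le_refl 0
  · exact zero_le_one
  · exact le_refl 0

lemma Kup_nonneg (hb : ∀ i, i < n - 1 → 0 < b i) (hn : 3 ≤ n) (p q : Fin n) :
    0 ≤ Kup n b p q := by
  have hq := q.isLt
  unfold Kup
  split_ifs with h1 h2
  · exact zero_le_one
  · exact (hb _ (by omega)).le
  · exact le_refl 0

lemma Klo_minor_nonneg (ha : ∀ i, i < n - 2 → 0 < a i) (m : ℕ) (I J : Fin m → Fin n)
    (hI : StrictMono I) (hJ : StrictMono J) : 0 ≤ ((Klo n a).submatrix I J).det := by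
  refine lowerBidiag_minor_nonneg _ (Klo_nonneg ha) ?_ m I J hI hJ
  intro p q h1 h2
  unfold Klo
  rw [if_neg (by omega), if_neg (by omega)]

lemma Kup_minor_nonneg (hb : ∀ i, i < n - 1 → 0 < b i) (hn : 3 ≤ n) (m : ℕ)
    (I J : Fin m → Fin n) (hI : StrictMono I) (hJ : StrictMono J) :
    0 ≤ ((Kup n b).submatrix I J).det := by
  refine upperBidiag_minor_nonneg _ (Kup_nonneg hb hn) ?_ m I J hI hJ
  intro p q h1 h2
  unfold Kup
  rw [if_neg (by omega), if_neg (by omega)]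

lemma KloKup_eq (hn : 3 ≤ n) (p q : Fin n) (hq : (q : ℕ) + 1 ≠ n) :
    (Klo n a * Kup n b) p q = Kgen n a b p q := by
  have hpn := p.isLt
  have hqn := q.isLt
  rw [Matrix.mul_apply]
  rcases Nat.lt_trichotomy (p : ℕ) (q : ℕ) with h | h | h
  · rcases Nat.lt_or_ge ((p : ℕ) + 1) (q : ℕ) with h' | h'
    · -- q ≥ p + 2 : zero
      rw [Finset.sum_eq_zero, Kgen_zero hn (Or.inl (by omega))]
      intro k _
      by_cases hk : (k : ℕ) = (p : ℕ)
      · have : Kup n b k q = 0 := by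
          unfold Kup; rw [if_neg (by omega), if_neg (by omega)]
        rw [this, mul_zero]
      · by_cases hk2 : (p : ℕ) = (k : ℕ) + 1
        · have : Kup n b k q = 0 := by
            unfold Kup; rw [if_neg (by omega), if_neg (by omega)]
          rw [this, mul_zero]
        · have : Klo n a p k = 0 := by
            unfold Klo; rw [if_neg (by omega), if_neg (by omega)]
          rw [this, zero_mul]
    · -- q = p + 1
      have hq1 : (q : ℕ) = (p : ℕ) + 1 := by omega
      have hp3 : (p : ℕ) + 3 ≤ n := by omega
      rw [Finset.sum_eq_single_of_mem p (Finset.mem_univ p), Kgen_super hn hq1 hp3]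
      · have h1 : Klo n a p p = a p := by
          unfold Klo; rw [if_pos rfl, if_pos (by omega)]
        have h2 : Kup n b p q = b p := by
          unfold Kup; rw [if_neg (by omega), if_pos hq1]
        rw [h1, h2]
      · intro k _ hk
        have hkv : (k : ℕ) ≠ (p : ℕ) := fun hc => hk (Fin.ext hc)
        by_cases hk2 : (p : ℕ) = (k : ℕ) + 1
        · have : Kup n b k q = 0 := by
            unfold Kup; rw [if_neg (by omega), if_neg (by omega)]
          rw [this, mul_zero]
        · have : Klo n a p k = 0 := by
            unfold Klo; rw [if_neg (by omega), if_neg (by omega)]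
          rw [this, zero_mul]
  · -- diagonal
    have hple : (p : ℕ) + 1 ≠ n := by omega
    rcases Nat.eq_or_lt_of_le (Nat.zero_le (p : ℕ)) with h0 | h0
    · -- p = 0
      rw [Finset.sum_eq_single_of_mem p (Finset.mem_univ p), Kgen_d0 hn (by omega) (by omega)]
      · have h1 : Klo n a p p = a p := by
          unfold Klo; rw [if_pos rfl, if_pos (by omega)]
        have h2 : Kup n b p q = 1 := by
          unfold Kup; rw [if_pos (by omega)]
        rw [h1, h2, mul_one]
        have hv0 : (p : ℕ) = 0 := by omega
        rw [hv0]
      · intro k _ hk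
        have hkv : (k : ℕ) ≠ (p : ℕ) := fun hc => hk (Fin.ext hc)
        have : Klo n a p k = 0 := by
          unfold Klo; rw [if_neg (by omega), if_neg (by omega)]
        rw [this, zero_mul]
    · -- p ≥ 1 : two terms
      have hp1 : 1 ≤ (p : ℕ) := h0
      set p' : Fin n := ⟨(p : ℕ) - 1, by omega⟩ with hp'
      have hp'v : (p' : ℕ) = (p : ℕ) - 1 := rfl
      have hsum : ∑ k, Klo n a p k * Kup n b k q
          = Klo n a p p * Kup n b p q + ∑ k ∈ Finset.univ.erase p,
            Klo n a p k * Kup n b k q := by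
        exact (Finset.add_sum_erase _ _ (Finset.mem_univ p)).symm
      rw [hsum]
      have herase : ∑ k ∈ Finset.univ.erase p, Klo n a p k * Kup n b k q
          = Klo n a p p' * Kup n b p' q := by
        apply Finset.sum_eq_single_of_mem p'
        · refine Finset.mem_erase.mpr ⟨?_, Finset.mem_univ _⟩
          intro hc
          have := congrArg Fin.val hc
          omega
        · intro k hk hkp'
          have hkv : (k : ℕ) ≠ (p : ℕ) := by
            intro hc
            exact (Finset.mem_erase.mp hk).1 (Fin.ext hc)
          have hkv' : (k : ℕ) ≠ (p : ℕ) - 1 := by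
            intro hc
            exact hkp' (Fin.ext (by omega))
          have : Klo n a p k = 0 := by
            unfold Klo; rw [if_neg (by omega), if_neg (by omega)]
          rw [this, zero_mul]
      rw [herase]
      have h2 : Kup n b p q = 1 := by
        unfold Kup; rw [if_pos (by omega)]
      have h3 : Klo n a p p' = 1 := by
        unfold Klo; rw [if_neg (by omega), if_pos (by omega)]
      have h4 : Kup n b p' q = b ((p : ℕ) - 1) := by
        unfold Kup; rw [if_neg (by omega), if_pos (by omega)]
      rw [h2, h3, h4, mul_one, one_mul]
      rcases Nat.lt_or_ge ((p : ℕ) + 2) n with hcase | hcase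
      · -- generic diagonal
        rw [Kgen_diag hn (by omega) hp1 (by omega)]
        have : Klo n a p p = a p := by
          unfold Klo; rw [if_pos rfl, if_pos (by omega)]
        rw [this]
      · -- p = n - 2
        have hpn2 : (p : ℕ) + 2 = n := by omega
        rw [Kgen_dlast hn hpn2 (by omega)]
        have : Klo n a p p = 0 := by
          unfold Klo; rw [if_pos rfl, if_neg (by omega)]
        rw [this, zero_add]
        congr 1
        omega
  · -- p > q
    rcases Nat.lt_or_ge ((q : ℕ) + 1) (p : ℕ) with h' | h'
    · -- p ≥ q + 2 : zero
      rw [Finset.sum_eq_zero, Kgen_zero hn (Or.inr (by omega))]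
      intro k _
      by_cases hk : (k : ℕ) = (q : ℕ)
      · have : Klo n a p k = 0 := by
          unfold Klo; rw [if_neg (by omega), if_neg (by omega)]
        rw [this, zero_mul]
      · by_cases hk2 : (q : ℕ) = (k : ℕ) + 1
        · have : Klo n a p k = 0 := by
            unfold Klo; rw [if_neg (by omega), if_neg (by omega)]
          rw [this, zero_mul]
        · have : Kup n b k q = 0 := by
            unfold Kup; rw [if_neg (by omega), if_neg (by omega)]
          rw [this, mul_zero]
    · -- p = q + 1
      have hpq : (p : ℕ) = (q : ℕ) + 1 := by omega
      rw [Finset.sum_eq_single_of_mem q (Finset.mem_univ q), Kgen_sub hn hpq]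
      · have h1 : Klo n a p q = 1 := by
          unfold Klo; rw [if_neg (by omega), if_pos (by omega)]
        have h2 : Kup n b q q = 1 := by
          unfold Kup; rw [if_pos rfl]
        rw [h1, h2, mul_one]
      · intro k _ hk
        have hkv : (k : ℕ) ≠ (q : ℕ) := fun hc => hk (Fin.ext hc)
        by_cases hk2 : (k : ℕ) = (p : ℕ)
        · have : Kup n b k q = 0 := by
            unfold Kup; rw [if_neg (by omega), if_neg (by omega)]
          rw [this, mul_zero]
        · have : Klo n a p k = 0 := by
            unfold Klo; rw [if_neg (by omega), if_neg (by omega)]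
          rw [this, zero_mul]

end Bidiag




section Rec

lemma det_rec2 {m : ℕ} (M : Matrix (Fin (m + 2)) (Fin (m + 2)) ℝ)
    (hr : ∀ q : Fin (m + 2), 2 ≤ (q : ℕ) → M 0 q = 0)
    (hc : ∀ p : Fin (m + 2), 2 ≤ (p : ℕ) → M p 0 = 0) :
    M.det = M 0 0 * (M.submatrix Fin.succ Fin.succ).det
      - M 0 1 * M 1 0 * (M.submatrix (Fin.succ ∘ Fin.succ) (Fin.succ ∘ Fin.succ)).det := by
  rw [det_succ_row_zero M, Fin.sum_univ_succ, Fin.sum_univ_succ]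
  have hz : ∀ j : Fin m,
      (-1 : ℝ) ^ (((j.succ.succ : Fin (m + 2))) : ℕ) * M 0 j.succ.succ *
        (M.submatrix Fin.succ (Fin.succAbove j.succ.succ)).det = 0 := by
    intro j
    rw [hr j.succ.succ (by rw [Fin.val_succ, Fin.val_succ]; omega)]
    ring
  rw [Finset.sum_eq_zero fun j _ => hz j, add_zero]
  have hsa0 : Fin.succAbove (0 : Fin (m + 2)) = Fin.succ := Fin.succAbove_zero
  have hone : ((0 : Fin (m + 1)).succ : Fin (m + 2)) = (1 : Fin (m + 2)) := by
    ext; simp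
  have hz0 : Fin.succAbove (1 : Fin (m + 2)) (0 : Fin (m + 1)) = 0 := by
    apply Fin.succAbove_of_castSucc_lt
    simp [Fin.lt_def]
  have hN : (M.submatrix Fin.succ (Fin.succAbove (1 : Fin (m + 2)))).det
      = M 1 0 * (M.submatrix (Fin.succ ∘ Fin.succ) (Fin.succ ∘ Fin.succ)).det := by
    have hcol : ∀ i : Fin (m + 1), i ≠ 0 →
        (M.submatrix Fin.succ (Fin.succAbove (1 : Fin (m + 2)))) i 0 = 0 := by
      intro i hi
      have hiv : 1 ≤ (i : ℕ) := by
        rcases Nat.eq_or_lt_of_le (Nat.zero_le (i : ℕ)) with h | h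
        · exact absurd (Fin.ext h.symm : i = 0) hi
        · exact h
      rw [Matrix.submatrix_apply, hz0]
      exact hc i.succ (by rw [Fin.val_succ]; omega)
    rw [det_col_support0 _ hcol]
    have hAA : (M.submatrix Fin.succ (Fin.succAbove (1 : Fin (m + 2)))) 0 0 = M 1 0 := by
      rw [Matrix.submatrix_apply, hz0, hone]
    have hBB : ((M.submatrix Fin.succ (Fin.succAbove (1 : Fin (m + 2)))).submatrix
          Fin.succ Fin.succ)
        = M.submatrix (Fin.succ ∘ Fin.succ) (Fin.succ ∘ Fin.succ) := by
      rw [Matrix.submatrix_submatrix]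
      congr 1
    rw [hAA, hBB]
  rw [hsa0, hone, hN]
  simp only [Fin.val_zero, pow_zero, one_mul, Fin.val_one, pow_one]
  ring

end Rec

section Corner

variable {n : ℕ} {a b : ℕ → ℝ}

noncomputable def SS (n : ℕ) (a b : ℕ → ℝ) (i : ℕ) : ℝ :=
  ∑ k ∈ Finset.range i, (∏ t ∈ Finset.range k, b t) * ∏ t ∈ Finset.Ico (k + 1) (n - 2), a t

lemma SS_eq_X : SS n a b (n - 2) = KgenX n a b := rfl

lemma SS_nonneg (hn : 3 ≤ n) (ha : ∀ i, i < n - 2 → 0 < a i) (hb : ∀ i, i < n - 1 → 0 < b i)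
    {i : ℕ} (hi : i ≤ n - 2) : 0 ≤ SS n a b i := by
  apply Finset.sum_nonneg
  intro k hk
  rw [Finset.mem_range] at hk
  apply mul_nonneg
  · apply Finset.prod_nonneg
    intro t ht
    rw [Finset.mem_range] at ht
    exact (hb t (by omega)).le
  · apply Finset.prod_nonneg
    intro t ht
    rw [Finset.mem_Ico] at ht
    exact (ha t (by omega)).le

lemma corner_det (hn : 3 ≤ n) : ∀ len, 1 ≤ len → ∀ i, (i + 1) + len = n →
    ∀ f : Fin len → Fin n, (∀ k : Fin len, (f k : ℕ) = (i + 1) + (k : ℕ)) →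
    ((Kgen n a b).submatrix f f).det
      = b (n - 2) * (∏ t ∈ Finset.Ico i (n - 2), b t) * SS n a b i := by
  intro len
  induction len using Nat.strong_induction_on with
  | _ len IH =>
    match len with
    | 0 => intro h0; omega
    | 1 =>
      intro _ i hi f hf
      have hieq : i = n - 2 := by omega
      subst hieq
      have hf0 : ((f 0 : Fin n) : ℕ) + 1 = n := by
        have := hf 0; simp at this; omega
      rw [Matrix.det_fin_one, Matrix.submatrix_apply, Kgen_corner hn hf0 hf0]
      rw [Finset.Ico_self, Finset.prod_empty, SS_eq_X]
      ring
    | 2 =>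
      intro _ i hi f hf
      have hieq : i = n - 3 := by omega
      subst hieq
      have hf0 : ((f 0 : Fin n) : ℕ) + 2 = n := by
        have := hf 0; simp at this; omega
      have hf1 : ((f 1 : Fin n) : ℕ) + 1 = n := by
        have := hf 1; simp at this; omega
      have hf10 : ((f 1 : Fin n) : ℕ) = ((f 0 : Fin n) : ℕ) + 1 := by omega
      rw [Matrix.det_fin_two]
      simp only [Matrix.submatrix_apply]
      rw [Kgen_dlast hn hf0 hf0, Kgen_corner hn hf1 hf1, Kgen_Y hn hf0 hf1,
        Kgen_sub hn (by omega)]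
      have h32 : n - 2 = (n - 3) + 1 := by omega
      have hX : KgenX n a b = SS n a b (n - 3) + ∏ t ∈ Finset.range (n - 3), b t := by
        unfold KgenX SS
        rw [h32, Finset.sum_range_succ, ← h32, Finset.Ico_self, Finset.prod_empty, mul_one]
      have hY : KgenY n b = (∏ t ∈ Finset.range (n - 3), b t) * b (n - 3) := by
        unfold KgenY
        rw [h32, Finset.prod_range_succ]
      have hIb : ∏ t ∈ Finset.Ico (n - 3) (n - 2), b t = b (n - 3) := by
        rw [h32, Nat.Ico_succ_singleton, Finset.prod_singleton]
      rw [hX, hY, hIb]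
      ring
    | (l + 3) =>
      intro _ i hi f hf
      have hf0 : ((f 0 : Fin n) : ℕ) = i + 1 := by
        have := hf 0; simpa using this
      have hf1 : ((f 1 : Fin n) : ℕ) = i + 2 := by
        have := hf 1
        rw [this]
        norm_num
      have hrec := det_rec2 (m := l + 1) ((Kgen n a b).submatrix f f) ?_ ?_
      · rw [hrec]
        have e00 : ((Kgen n a b).submatrix f f) 0 0 = a (i + 1) + b i := by
          rw [Matrix.submatrix_apply, Kgen_diag hn rfl (by omega) (by omega), hf0]
          norm_num
        have e01 : ((Kgen n a b).submatrix f f) 0 1 = a (i + 1) * b (i + 1) := by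
          rw [Matrix.submatrix_apply, Kgen_super hn (by omega) (by omega), hf0]
        have e10 : ((Kgen n a b).submatrix f f) 1 0 = 1 := by
          rw [Matrix.submatrix_apply, Kgen_sub hn (by omega)]
        have esub1 : (((Kgen n a b).submatrix f f).submatrix Fin.succ Fin.succ).det
            = b (n - 2) * (∏ t ∈ Finset.Ico (i + 1) (n - 2), b t) * SS n a b (i + 1) := by
          rw [Matrix.submatrix_submatrix]
          refine IH (l + 2) (by omega) (by omega) (i + 1) (by omega) _ ?_
          intro k
          have := hf k.succ
          rw [Function.comp_apply, this, Fin.val_succ]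
          omega
        have esub2 : (((Kgen n a b).submatrix f f).submatrix (Fin.succ ∘ Fin.succ)
              (Fin.succ ∘ Fin.succ)).det
            = b (n - 2) * (∏ t ∈ Finset.Ico (i + 2) (n - 2), b t) * SS n a b (i + 2) := by
          rw [Matrix.submatrix_submatrix]
          refine IH (l + 1) (by omega) (by omega) (i + 2) (by omega) _ ?_
          intro k
          have := hf k.succ.succ
          rw [Function.comp_apply, Function.comp_apply, this, Fin.val_succ, Fin.val_succ]
          omega
        rw [e00, e01, e10, esub1, esub2]
        have hS2 : SS n a b (i + 2) = SS n a b (i + 1)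
            + (∏ t ∈ Finset.range (i + 1), b t) * ∏ t ∈ Finset.Ico (i + 2) (n - 2), a t := by
          unfold SS
          rw [Finset.sum_range_succ]
        have hS1 : SS n a b (i + 1) = SS n a b i
            + (∏ t ∈ Finset.range i, b t) * ∏ t ∈ Finset.Ico (i + 1) (n - 2), a t := by
          unfold SS
          rw [Finset.sum_range_succ]
        have hr1 : ∏ t ∈ Finset.range (i + 1), b t = (∏ t ∈ Finset.range i, b t) * b i :=
          Finset.prod_range_succ _ _
        have hb1 : ∏ t ∈ Finset.Ico i (n - 2), b t
            = b i * ∏ t ∈ Finset.Ico (i + 1) (n - 2), b t :=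
          Finset.prod_eq_prod_Ico_succ_bot (by omega) _
        have hb2 : ∏ t ∈ Finset.Ico (i + 1) (n - 2), b t
            = b (i + 1) * ∏ t ∈ Finset.Ico (i + 2) (n - 2), b t :=
          Finset.prod_eq_prod_Ico_succ_bot (by omega) _
        have ha1 : ∏ t ∈ Finset.Ico (i + 1) (n - 2), a t
            = a (i + 1) * ∏ t ∈ Finset.Ico (i + 2) (n - 2), a t :=
          Finset.prod_eq_prod_Ico_succ_bot (by omega) _
        rw [hS2, hS1, hr1, hb1, hb2, ha1]
        ring
      · intro q hq
        rw [Matrix.submatrix_apply]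
        refine Kgen_zero hn (Or.inl ?_)
        rw [hf 0, hf q]
        simp
        omega
      · intro p hp
        rw [Matrix.submatrix_apply]
        refine Kgen_zero hn (Or.inr ?_)
        rw [hf 0, hf p]
        simp
        omega

end Corner




section Assemble

variable {n : ℕ} {a b : ℕ → ℝ}

lemma interval_strictMono {len i0 : ℕ} {f : Fin len → Fin n}
    (hf : ∀ k : Fin len, (f k : ℕ) = i0 + (k : ℕ)) : StrictMono f := by
  intro k l hkl
  rw [Fin.lt_def, hf k, hf l]
  have : (k : ℕ) < (l : ℕ) := hkl
  omega

lemma Kgen_prin (hn : 3 ≤ n) (ha : ∀ i, i < n - 2 → 0 < a i)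
    (hb : ∀ i, i < n - 1 → 0 < b i) :
    ∀ (len i0 : ℕ), len ≤ n - 1 → ∀ f : Fin len → Fin n,
      (∀ k : Fin len, (f k : ℕ) = i0 + (k : ℕ)) →
      0 ≤ ((Kgen n a b).submatrix f f).det := by
  intro len i0 hlen f hf
  rcases len with - | l
  · simp [Matrix.det_fin_zero]
  · have hlast : i0 + l < n := by
      have h1 := hf ⟨l, by omega⟩
      have h2 := (f ⟨l, by omega⟩).isLt
      simp at h1
      omega
    rcases Nat.lt_or_ge (i0 + (l + 1)) n with hcase | hcase
    · -- all columns avoid the last index: bidiagonal factorization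
      have hEq : (Kgen n a b).submatrix f f = (Klo n a * Kup n b).submatrix f f := by
        ext k l'
        simp only [Matrix.submatrix_apply]
        refine (KloKup_eq hn _ _ ?_).symm
        have h1 := hf l'
        have h2 : (l' : ℕ) < l + 1 := l'.isLt
        omega
      rw [hEq, submatrix_mul_submatrix, det_mul_sum_strictMono]
      apply Finset.sum_nonneg
      intro g hg
      have hgSM : StrictMono g := by
        simpa using (Finset.mem_filter.mp hg).2
      have hfSM : StrictMono f := interval_strictMono hf
      have e1 : (((Klo n a).submatrix f id).submatrix id g) = (Klo n a).submatrix f g := by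
        rw [Matrix.submatrix_submatrix]
        rfl
      have e2 : (((Kup n b).submatrix id f).submatrix g id) = (Kup n b).submatrix g f := by
        rw [Matrix.submatrix_submatrix]
        rfl
      rw [e1, e2]
      exact mul_nonneg (Klo_minor_nonneg ha _ _ _ hfSM hgSM)
        (Kup_minor_nonneg hb hn _ _ _ hgSM hfSM)
    · -- the interval reaches the last index: corner formula
      have h870 : i0 + (l + 1) = n := by omega
      have hi0 : 1 ≤ i0 := by omega
      obtain ⟨i, rfl⟩ : ∃ i, i0 = i + 1 := ⟨i0 - 1, by omega⟩
      rw [corner_det hn (l + 1) (by omega) i (by omega) f hf]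
      have h1 : (0 : ℝ) ≤ b (n - 2) := (hb _ (by omega)).le
      have h2 : (0 : ℝ) ≤ ∏ t ∈ Finset.Ico i (n - 2), b t := by
        apply Finset.prod_nonneg
        intro t ht
        rw [Finset.mem_Ico] at ht
        exact (hb t (by omega)).le
      have h3 : (0 : ℝ) ≤ SS n a b i := SS_nonneg hn ha hb (by omega)
      positivity
  
lemma Kgen_kNonneg (hn : 3 ≤ n) (ha : ∀ i, i < n - 2 → 0 < a i)
    (hb : ∀ i, i < n - 1 → 0 < b i) :
    ∀ m, m ≤ n - 1 → ∀ I J : Fin m → Fin n, StrictMono I → StrictMono J →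
      0 ≤ ((Kgen n a b).submatrix I J).det := by
  refine tridiag_minor_nonneg (Kgen n a b) (Kgen_nonneg hn ha hb)
    (fun p q h => Kgen_zero hn h) (n - 1) ?_
  intro len i0 hlen f hf
  exact Kgen_prin hn ha hb len i0 hlen f hf

lemma Kgen_det_nonpos (hn : 3 ≤ n) (ha : ∀ i, i < n - 2 → 0 < a i)
    (hb : ∀ i, i < n - 1 → 0 < b i) :
    (Kgen n a b).det ≤ 0 := by
  obtain ⟨m, rfl⟩ : ∃ m, n = m + 3 := ⟨n - 3, by omega⟩
  set K := Kgen (m + 3) a b with hK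
  have hrec := det_rec2 (m := m + 1) K ?_ ?_
  · have e00 : K 0 0 = a 0 := Kgen_d0 hn rfl rfl
    have e01 : K 0 1 = a 0 * b 0 := by
      have h01 : ((1 : Fin (m + 3)) : ℕ) = ((0 : Fin (m + 3)) : ℕ) + 1 := by simp
      have h03 : ((0 : Fin (m + 3)) : ℕ) + 3 ≤ m + 3 := by simp
      have := Kgen_super (n := m + 3) (a := a) (b := b) hn h01 h03
      rw [hK, this]
      simp
    have e10 : K 1 0 = 1 := Kgen_sub hn (by simp)
    have esub1 : (K.submatrix Fin.succ Fin.succ).det = 0 := by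
      have := corner_det (n := m + 3) (a := a) (b := b) hn (m + 2) (by omega) 0 (by omega)
        Fin.succ (fun k => by rw [Fin.val_succ]; omega)
      rw [this]
      have : SS (m + 3) a b 0 = 0 := by
        unfold SS
        simp
      rw [this, mul_zero]
    have esub2 : (K.submatrix (Fin.succ ∘ Fin.succ) (Fin.succ ∘ Fin.succ)).det
        = b (m + 3 - 2) * (∏ t ∈ Finset.Ico 1 (m + 3 - 2), b t) * SS (m + 3) a b 1 := by
      exact corner_det (n := m + 3) (a := a) (b := b) hn (m + 1) (by omega) 1 (by omega)
        (Fin.succ ∘ Fin.succ) (fun k => by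
          simp only [Function.comp_apply, Fin.val_succ]
          omega)
    rw [hrec, e00, e01, e10, esub1, esub2]
    have h1 : (0 : ℝ) ≤ a 0 := (ha 0 (by omega)).le
    have h2 : (0 : ℝ) ≤ b 0 := (hb 0 (by omega)).le
    have h3 : (0 : ℝ) ≤ b (m + 3 - 2) := (hb _ (by omega)).le
    have h4 : (0 : ℝ) ≤ ∏ t ∈ Finset.Ico 1 (m + 3 - 2), b t := by
      apply Finset.prod_nonneg
      intro t ht
      rw [Finset.mem_Ico] at ht
      exact (hb t (by omega)).le
    have h5 : (0 : ℝ) ≤ SS (m + 3) a b 1 := SS_nonneg hn ha hb (by omega)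
    have hprod : (0 : ℝ) ≤ a 0 * b 0 * 1
        * (b (m + 3 - 2) * (∏ t ∈ Finset.Ico 1 (m + 3 - 2), b t) * SS (m + 3) a b 1) := by
      apply mul_nonneg
      · apply mul_nonneg (mul_nonneg h1 h2)
        exact zero_le_one
      · exact mul_nonneg (mul_nonneg h3 h4) h5
    linarith
  · intro q hq
    exact Kgen_zero hn (Or.inl (by simpa using hq))
  · intro p hp
    exact Kgen_zero hn (Or.inr (by simpa using hp))

lemma strictMono_fin_id {N : ℕ} {I : Fin N → Fin N} (hI : StrictMono I) : I = id := by
  funext k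
  rcases N with - | m
  · exact k.elim0
  · have h1 : ((I 0 : Fin (m + 1)) : ℕ) + (k : ℕ) ≤ (I k : ℕ) := strictMono_le' hI k
    have h2 : (I k : ℕ) + (m - (k : ℕ)) ≤ (I ⟨(k : ℕ) + (m - (k : ℕ)), by omega⟩ : ℕ) :=
      strictMono_add_le hI (m - (k : ℕ)) k (by have := k.isLt; omega)
    have h3 := (I ⟨(k : ℕ) + (m - (k : ℕ)), by have := k.isLt; omega⟩ : Fin (m + 1)).isLt
    have h4 := k.isLt
    ext
    simp only [id_eq]
    omega

end Assemble



end KP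
/-- The product of two `K`-generators is totally nonnegative. -/
theorem Kgen_mul_Kgen_totallyNonneg (n : ℕ) (hn : 3 ≤ n) (A B C D : ℕ → ℝ)
    (hA : ∀ i, i < n - 2 → 0 < A i) (hB : ∀ i, i < n - 1 → 0 < B i)
    (hC : ∀ i, i < n - 2 → 0 < C i) (hD : ∀ i, i < n - 1 → 0 < D i) :
    IsKNonneg n (Kgen n A B * Kgen n C D) := by
  intro m hm I J hI hJ
  rcases Nat.lt_or_ge m n with hlt | hge
  · have hm1 : m ≤ n - 1 := by omega
    rw [KP.submatrix_mul_submatrix, KP.det_mul_sum_strictMono]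
    apply Finset.sum_nonneg
    intro g hg
    have hgSM : StrictMono g := by simpa using (Finset.mem_filter.mp hg).2
    have e1 : (((Kgen n A B).submatrix I id).submatrix id g)
        = (Kgen n A B).submatrix I g := by
      rw [Matrix.submatrix_submatrix]; rfl
    have e2 : (((Kgen n C D).submatrix id J).submatrix g id)
        = (Kgen n C D).submatrix g J := by
      rw [Matrix.submatrix_submatrix]; rfl
    rw [e1, e2]
    exact mul_nonneg (KP.Kgen_kNonneg hn hA hB m hm1 I g hI hgSM)
      (KP.Kgen_kNonneg hn hC hD m hm1 g J hgSM hJ)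
  · have hmeq : m = n := le_antisymm hm hge
    subst hmeq
    rw [KP.strictMono_fin_id hI, KP.strictMono_fin_id hJ, Matrix.submatrix_id_id,
      Matrix.det_mul]
    have h1 := KP.Kgen_det_nonpos hn hA hB
    have h2 := KP.Kgen_det_nonpos hn hC hD
    have hm2 := mul_nonneg (neg_nonneg.mpr h1) (neg_nonneg.mpr h2)
    rwa [neg_mul_neg] at hm2
end

section
/- Let H_n be the monoid presented by generators t_1, …, t_{n−1} subject to the relations t_i·t_i = t_i for all i, t_i·t_j·t_i = t_j·t_i·t_j whenever |i−j| = 1, and t_i·t_j = t_j·t_i whenever |i−j| > 1. For m ∈ H_n, let ℓ(m) denote the minimal length of a word in the generators representing m. Then for every m ∈ H_n and every generator t = t_i, exactly one of the following holds: ℓ(t·m) = ℓ(m) + 1, or t·m = m. -/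
/-- One-step rewriting between words in the generators `t_0, …, t_{n-2}` of the
0-Hecke monoid `H_n`: the shortening relation `t_i t_i = t_i`, the braid relation
`t_i t_j t_i = t_j t_i t_j` for `|i - j| = 1`, and the commutation relation
`t_i t_j = t_j t_i` for `|i - j| > 1`, applied inside any context. -/
inductive HeckeStep (n : ℕ) : List (Fin (n - 1)) → List (Fin (n - 1)) → Prop
  | shorten (u v : List (Fin (n - 1))) (i : Fin (n - 1)) :
      HeckeStep n (u ++ [i, i] ++ v) (u ++ [i] ++ v)
  | braid (u v : List (Fin (n - 1))) (i j : Fin (n - 1))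
      (hij : (i : ℕ) + 1 = (j : ℕ) ∨ (j : ℕ) + 1 = (i : ℕ)) :
      HeckeStep n (u ++ [i, j, i] ++ v) (u ++ [j, i, j] ++ v)
  | comm (u v : List (Fin (n - 1))) (i j : Fin (n - 1))
      (hij : (i : ℕ) + 1 < (j : ℕ) ∨ (j : ℕ) + 1 < (i : ℕ)) :
      HeckeStep n (u ++ [i, j] ++ v) (u ++ [j, i] ++ v)

/-- Two words represent the same element of the monoid `H_n` iff they are related by
the equivalence relation generated by the defining relations. -/
def HeckeEquiv (n : ℕ) : List (Fin (n - 1)) → List (Fin (n - 1)) → Prop :=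
  Relation.EqvGen (HeckeStep n)

/-- The length of the element of `H_n` represented by the word `w`: the minimal
number of letters of a word representing the same element. -/
noncomputable def heckeLen (n : ℕ) (w : List (Fin (n - 1))) : ℕ :=
  sInf {k | ∃ w', HeckeEquiv n w w' ∧ w'.length = k}


namespace HeckeAux

variable {n : ℕ}

/-- position `i` as an element of `Fin n`. -/
def posA (i : Fin (n - 1)) : Fin n := ⟨i.1, by have := i.2; omega⟩
/-- position `i+1` as an element of `Fin n`. -/
def posB (i : Fin (n - 1)) : Fin n := ⟨i.1 + 1, by have := i.2; omega⟩

lemma posA_ne_posB (i : Fin (n - 1)) : posA i ≠ posB i := by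
  simp [posA, posB, Fin.ext_iff]

/-- the simple transposition. -/
def sw (i : Fin (n - 1)) : Equiv.Perm (Fin n) := Equiv.swap (posA i) (posB i)

lemma sw_mul_self (i : Fin (n - 1)) : sw i * sw i = 1 := by
  simp [sw, Equiv.swap_mul_self]

lemma sw_mul_cancel (i : Fin (n - 1)) (p : Equiv.Perm (Fin n)) : sw i * (sw i * p) = p := by
  rw [← mul_assoc, sw_mul_self, one_mul]

/-- the set of inversions of a permutation. -/
def invs (p : Equiv.Perm (Fin n)) : Finset (Fin n × Fin n) :=
  Finset.univ.filter (fun q => q.1 < q.2 ∧ p q.2 < p q.1)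

/-- the number of inversions. -/
def len (p : Equiv.Perm (Fin n)) : ℕ := (invs p).card

/-- `s i` is a left descent of `p`. -/
def Des (i : Fin (n - 1)) (p : Equiv.Perm (Fin n)) : Prop := p⁻¹ (posB i) < p⁻¹ (posA i)

lemma not_des_iff (i : Fin (n - 1)) (p : Equiv.Perm (Fin n)) :
    ¬ Des i p ↔ p⁻¹ (posA i) < p⁻¹ (posB i) := by
  have h : p⁻¹ (posA i) ≠ p⁻¹ (posB i) := fun h => posA_ne_posB i (p⁻¹.injective h)
  unfold Des
  constructor
  · intro h2
    rcases lt_trichotomy (p⁻¹ (posA i)) (p⁻¹ (posB i)) with h1 | h1 | h1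
    · exact h1
    · exact absurd h1 h
    · exact absurd h1 h2
  · intro h1 h2
    exact absurd (h2.trans h1) (lt_irrefl _)

lemma swap_adj_lt_iff (i : Fin (n - 1)) (u v : Fin n) :
    sw i v < sw i u ↔ ((v < u ∧ ¬(u = posB i ∧ v = posA i)) ∨ (u = posA i ∧ v = posB i)) := by
  have hA : (posA i : Fin n).1 + 1 = (posB i).1 := rfl
  have hB := (posB i : Fin n).2
  have key : ∀ x y : Fin n, (x = y) = ((x : ℕ) = (y : ℕ)) := by
    intro x y; rw [eq_iff_iff]; exact Fin.ext_iff
  simp only [sw, Equiv.swap_apply_def]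
  simp only [key, Fin.lt_def]
  split_ifs <;> omega

lemma invs_mul_of_not_des (i : Fin (n - 1)) (p : Equiv.Perm (Fin n)) (h : ¬ Des i p) :
    invs (sw i * p) = insert (p⁻¹ (posA i), p⁻¹ (posB i)) (invs p) := by
  have hlt : p⁻¹ (posA i) < p⁻¹ (posB i) := (not_des_iff i p).mp h
  ext ⟨x, y⟩
  simp only [invs, Finset.mem_filter]
  simp only [invs, Finset.mem_filter, Finset.mem_insert, Finset.mem_univ, true_and,
    Prod.mk.injEq, Equiv.Perm.mul_apply]
  constructor
  · rintro ⟨hxy, hw⟩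
    rcases (swap_adj_lt_iff i (p x) (p y)).mp hw with ⟨h1, _⟩ | ⟨h1, h2⟩
    · exact Or.inr ⟨hxy, h1⟩
    · exact Or.inl ⟨by rw [← h1]; simp, by rw [← h2]; simp⟩
  · rintro (⟨h1, h2⟩ | ⟨hxy, h1⟩)
    · subst h1; subst h2
      refine ⟨hlt, (swap_adj_lt_iff i _ _).mpr (Or.inr ⟨by simp, by simp⟩)⟩
    · refine ⟨hxy, (swap_adj_lt_iff i _ _).mpr (Or.inl ⟨h1, ?_⟩)⟩
      rintro ⟨h2, h3⟩
      have hx : x = p⁻¹ (posB i) := by rw [← h2]; simp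
      have hy : y = p⁻¹ (posA i) := by rw [← h3]; simp
      rw [hx, hy] at hxy
      exact absurd (hxy.trans hlt) (lt_irrefl _)

lemma len_mul_of_not_des (i : Fin (n - 1)) (p : Equiv.Perm (Fin n)) (h : ¬ Des i p) :
    len (sw i * p) = len p + 1 := by
  rw [len, invs_mul_of_not_des i p h, Finset.card_insert_of_notMem, len]
  simp only [invs, Finset.mem_filter]
  rintro ⟨-, -, hw⟩
  simp only [Equiv.Perm.coe_inv, Equiv.apply_symm_apply] at hw
  have : (posA i : Fin n).1 + 1 = (posB i).1 := rfl
  rw [Fin.lt_def] at hw; omega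

lemma des_sw_iff (i : Fin (n - 1)) (p : Equiv.Perm (Fin n)) :
    Des i (sw i * p) ↔ ¬ Des i p := by
  have h1 : (sw i * p)⁻¹ (posA i) = p⁻¹ (posB i) := by
    simp [sw, mul_inv_rev, Equiv.Perm.mul_apply]
  have h2 : (sw i * p)⁻¹ (posB i) = p⁻¹ (posA i) := by
    simp [sw, mul_inv_rev, Equiv.Perm.mul_apply]
  rw [Des, h1, h2, ← not_des_iff]

lemma len_mul_of_des (i : Fin (n - 1)) (p : Equiv.Perm (Fin n)) (h : Des i p) :
    len (sw i * p) + 1 = len p := by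
  have h' : ¬ Des i (sw i * p) := by
    rw [des_sw_iff]; exact not_not_intro h
  have := len_mul_of_not_des i (sw i * p) h'
  rw [sw_mul_cancel] at this
  omega

lemma des_iff_len (i : Fin (n - 1)) (p : Equiv.Perm (Fin n)) :
    Des i p ↔ len (sw i * p) < len p := by
  by_cases h : Des i p
  · have := len_mul_of_des i p h; simp [h]; omega
  · have := len_mul_of_not_des i p h; simp [h]; omega

instance (i : Fin (n - 1)) (p : Equiv.Perm (Fin n)) : Decidable (Des i p) := by
  unfold Des; infer_instance

@[simp] lemma len_one : len (1 : Equiv.Perm (Fin n)) = 0 := by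
  rw [len, Finset.card_eq_zero]
  ext ⟨x, y⟩
  simp only [invs, Finset.mem_filter]
  simp only [invs, Finset.mem_filter, Finset.notMem_empty, iff_false, not_and,
    Finset.mem_univ, true_and, Equiv.Perm.one_apply]
  exact fun h1 h2 => absurd (h1.trans h2) (lt_irrefl _)

/-- Demazure operator: multiply by `s i` unless `s i` is already a left descent. -/
def dema (i : Fin (n - 1)) (p : Equiv.Perm (Fin n)) : Equiv.Perm (Fin n) :=
  if Des i p then p else sw i * p

/-- Demazure (0-Hecke) product of a word. -/
def pw : List (Fin (n - 1)) → Equiv.Perm (Fin n) := List.foldr dema 1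

@[simp] lemma pw_nil : pw ([] : List (Fin (n - 1))) = 1 := rfl
@[simp] lemma pw_cons (i : Fin (n - 1)) (w : List (Fin (n - 1))) :
    pw (i :: w) = dema i (pw w) := rfl

lemma pw_append (u v : List (Fin (n - 1))) : pw (u ++ v) = List.foldr dema (pw v) u := by
  simp [pw, List.foldr_append]

lemma des_dema (i : Fin (n - 1)) (p : Equiv.Perm (Fin n)) : Des i (dema i p) := by
  unfold dema
  by_cases h : Des i p
  · simpa [h]
  · simpa [h] using (des_sw_iff i p).mpr h

lemma len_dema_of_des (i : Fin (n - 1)) (p : Equiv.Perm (Fin n)) (h : Des i p) :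
    dema i p = p := by simp [dema, h]

lemma dema_of_not_des (i : Fin (n - 1)) (p : Equiv.Perm (Fin n)) (h : ¬ Des i p) :
    dema i p = sw i * p := by simp [dema, h]

lemma len_dema_le (i : Fin (n - 1)) (p : Equiv.Perm (Fin n)) :
    len (dema i p) ≤ len p + 1 := by
  by_cases h : Des i p
  · simp [dema, h]
  · simp [dema, h, len_mul_of_not_des i p h]

lemma len_pw_le (w : List (Fin (n - 1))) : len (pw w) ≤ w.length := by
  induction w with
  | nil => simp
  | cons i w ih =>
      have := len_dema_le i (pw w)
      simp only [pw_cons, List.length_cons]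
      omega

/-- The sorting operator on functions: sort values at positions `i`, `i+1` decreasingly. -/
def sortOp (i : Fin (n - 1)) (f : Fin n → Fin n) : Fin n → Fin n := fun x =>
  if x = posA i then max (f (posA i)) (f (posB i))
  else if x = posB i then min (f (posA i)) (f (posB i))
  else f x

lemma dema_inv_eq_sortOp (i : Fin (n - 1)) (p : Equiv.Perm (Fin n)) :
    ⇑(dema i p)⁻¹ = sortOp i ⇑p⁻¹ := by
  funext x
  by_cases h : Des i p
  · have hle : p⁻¹ (posB i) ≤ p⁻¹ (posA i) := le_of_lt h
    simp only [dema, h, if_true, sortOp]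
    split_ifs with h1 h2
    · subst h1; rw [max_eq_left hle]
    · subst h2; rw [min_eq_right hle]
    · rfl
  · have hle : p⁻¹ (posA i) ≤ p⁻¹ (posB i) := le_of_lt ((not_des_iff i p).mp h)
    simp only [dema, h, if_false, sortOp, mul_inv_rev]
    simp only [Equiv.Perm.mul_apply, sw]
    split_ifs with h1 h2
    · subst h1
      rw [Equiv.swap_inv, Equiv.swap_apply_left, max_eq_right hle]
    · subst h2
      rw [Equiv.swap_inv, Equiv.swap_apply_right, min_eq_left hle]
    · rw [Equiv.swap_inv, Equiv.swap_apply_of_ne_of_ne h1 h2]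

lemma sortOp_apply_A (i : Fin (n - 1)) (f : Fin n → Fin n) :
    sortOp i f (posA i) = max (f (posA i)) (f (posB i)) := by simp [sortOp]

lemma sortOp_apply_B (i : Fin (n - 1)) (f : Fin n → Fin n) :
    sortOp i f (posB i) = min (f (posA i)) (f (posB i)) := by
  simp [sortOp, (posA_ne_posB i).symm]

lemma sortOp_apply_of_ne (i : Fin (n - 1)) {x : Fin n}
    (h1 : x ≠ posA i) (h2 : x ≠ posB i) (f : Fin n → Fin n) : sortOp i f x = f x := by
  simp [sortOp, h1, h2]

lemma sortOp_idem (i : Fin (n - 1)) (f : Fin n → Fin n) :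
    sortOp i (sortOp i f) = sortOp i f := by
  funext x
  rcases eq_or_ne x (posA i) with rfl | h
  · simp only [sortOp_apply_A, sortOp_apply_B]
    exact max_eq_left min_le_max
  · rcases eq_or_ne x (posB i) with rfl | h'
    · simp only [sortOp_apply_A, sortOp_apply_B]
      exact min_eq_right min_le_max
    · rw [sortOp_apply_of_ne i h h', sortOp_apply_of_ne i h h']

lemma sortOp_comm (i j : Fin (n - 1)) (hij : (i : ℕ) + 1 < (j : ℕ) ∨ (j : ℕ) + 1 < (i : ℕ))
    (f : Fin n → Fin n) : sortOp i (sortOp j f) = sortOp j (sortOp i f) := by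
  have hd : ∀ x y : Fin n, ((x = posA i ∨ x = posB i) → (y = posA j ∨ y = posB j) → x ≠ y) := by
    rintro x y (rfl | rfl) (rfl | rfl) <;>
      simp only [ne_eq, Fin.ext_iff, posA, posB] <;> omega
  have hAA : (posA i : Fin n) ≠ posA j := hd _ _ (Or.inl rfl) (Or.inl rfl)
  have hAB : (posA i : Fin n) ≠ posB j := hd _ _ (Or.inl rfl) (Or.inr rfl)
  have hBA : (posB i : Fin n) ≠ posA j := hd _ _ (Or.inr rfl) (Or.inl rfl)
  have hBB : (posB i : Fin n) ≠ posB j := hd _ _ (Or.inr rfl) (Or.inr rfl)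
  funext x
  rcases eq_or_ne x (posA i) with rfl | h1
  · simp only [sortOp_apply_A, sortOp_apply_of_ne j hAA hAB, sortOp_apply_of_ne j hBA hBB]
  · rcases eq_or_ne x (posB i) with rfl | h2
    · simp only [sortOp_apply_B, sortOp_apply_of_ne j hAA hAB, sortOp_apply_of_ne j hBA hBB]
    · rcases eq_or_ne x (posA j) with rfl | h3
      · simp only [sortOp_apply_A, sortOp_apply_of_ne i hAA.symm hBA.symm,
          sortOp_apply_of_ne i hAB.symm hBB.symm]
      · rcases eq_or_ne x (posB j) with rfl | h4
        · simp only [sortOp_apply_B, sortOp_apply_of_ne i hAA.symm hBA.symm,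
            sortOp_apply_of_ne i hAB.symm hBB.symm]
        · rw [sortOp_apply_of_ne i h1 h2, sortOp_apply_of_ne j h3 h4,
            sortOp_apply_of_ne j h3 h4, sortOp_apply_of_ne i h1 h2]

lemma med {α : Type*} [LinearOrder α] (A B C : α) :
    min (max A B) (max (min A B) C) = max (min A (max B C)) (min B C) := by
  rw [min_max_distrib_left, min_eq_right min_le_max, min_max_distrib_right,
    min_max_distrib_left, max_assoc]

lemma sortOp_braid (i j : Fin (n - 1)) (hij : (i : ℕ) + 1 = (j : ℕ)) (f : Fin n → Fin n) :
    sortOp i (sortOp j (sortOp i f)) = sortOp j (sortOp i (sortOp j f)) := by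
  have hBA : (posB i : Fin n) = posA j := by simp [posA, posB, Fin.ext_iff, hij]
  have h02 : (posA i : Fin n) ≠ posB j := by
    simp only [ne_eq, posA, posB, Fin.ext_iff]; omega
  have h01 : (posA i : Fin n) ≠ posB i := posA_ne_posB i
  have h0Aj : (posA i : Fin n) ≠ posA j := by rw [← hBA]; exact h01
  have h12 : (posA j : Fin n) ≠ posB j := posA_ne_posB j
  have h1B : (posB i : Fin n) ≠ posB j := by rw [hBA]; exact h12
  have e1 : ∀ g : Fin n → Fin n, sortOp j g (posB i) = max (g (posB i)) (g (posB j)) := by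
    intro g; rw [hBA, sortOp_apply_A]
  have e2 : ∀ g : Fin n → Fin n, sortOp j g (posB j) = min (g (posB i)) (g (posB j)) := by
    intro g; rw [sortOp_apply_B, hBA]
  have e3 : ∀ g : Fin n → Fin n, sortOp j g (posA i) = g (posA i) :=
    fun g => sortOp_apply_of_ne j h0Aj h02 g
  have f1 : ∀ g : Fin n → Fin n, sortOp i g (posA i) = max (g (posA i)) (g (posB i)) :=
    fun g => sortOp_apply_A i g
  have f2 : ∀ g : Fin n → Fin n, sortOp i g (posB i) = min (g (posA i)) (g (posB i)) :=
    fun g => sortOp_apply_B i g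
  have f3 : ∀ g : Fin n → Fin n, sortOp i g (posB j) = g (posB j) :=
    fun g => sortOp_apply_of_ne i h02.symm h1B.symm g
  set A := f (posA i)
  set B := f (posB i)
  set C := f (posB j)
  funext x
  rcases eq_or_ne x (posA i) with rfl | hx1
  · rw [f1, e3, e1, f1, f2, f3, e3, f1, e3, e1]
    rw [← max_assoc, max_eq_left min_le_max, max_assoc]
  · rcases eq_or_ne x (posB i) with rfl | hx2
    · rw [f2, e3, e1, f1, f2, f3, e1, f2, f3, e3, e1, e2]
      exact med A B C
    · rcases eq_or_ne x (posB j) with rfl | hx3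
      · rw [f3, e2, f2, f3, e2, f2, f3, e3, e1, e2]
        rw [min_assoc, min_assoc, min_eq_right min_le_max]
      · have hxAj : x ≠ posA j := by rw [← hBA]; exact hx2
        rw [sortOp_apply_of_ne i hx1 hx2, sortOp_apply_of_ne j hxAj hx3,
          sortOp_apply_of_ne i hx1 hx2, sortOp_apply_of_ne j hxAj hx3,
          sortOp_apply_of_ne i hx1 hx2, sortOp_apply_of_ne j hxAj hx3]

lemma perm_eq_of_inv_coe {p q : Equiv.Perm (Fin n)} (h : ⇑p⁻¹ = ⇑q⁻¹) : p = q := by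
  have : p⁻¹ = q⁻¹ := Equiv.coe_inj.mp h
  exact inv_injective this

lemma dema_idem (i : Fin (n - 1)) (p : Equiv.Perm (Fin n)) :
    dema i (dema i p) = dema i p :=
  len_dema_of_des i (dema i p) (des_dema i p)

lemma dema_comm (i j : Fin (n - 1)) (hij : (i : ℕ) + 1 < (j : ℕ) ∨ (j : ℕ) + 1 < (i : ℕ))
    (p : Equiv.Perm (Fin n)) : dema i (dema j p) = dema j (dema i p) := by
  apply perm_eq_of_inv_coe
  rw [dema_inv_eq_sortOp, dema_inv_eq_sortOp, dema_inv_eq_sortOp, dema_inv_eq_sortOp,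
    sortOp_comm i j hij]

lemma dema_braid (i j : Fin (n - 1)) (hij : (i : ℕ) + 1 = (j : ℕ) ∨ (j : ℕ) + 1 = (i : ℕ))
    (p : Equiv.Perm (Fin n)) : dema i (dema j (dema i p)) = dema j (dema i (dema j p)) := by
  apply perm_eq_of_inv_coe
  rw [dema_inv_eq_sortOp, dema_inv_eq_sortOp, dema_inv_eq_sortOp, dema_inv_eq_sortOp,
    dema_inv_eq_sortOp, dema_inv_eq_sortOp]
  rcases hij with h | h
  · exact sortOp_braid i j h ⇑p⁻¹
  · exact (sortOp_braid j i h ⇑p⁻¹).symm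

lemma pw_step {w w' : List (Fin (n - 1))} (h : HeckeStep n w w') : pw w = pw w' := by
  cases h with
  | shorten u v i =>
      rw [List.append_assoc, List.append_assoc, pw_append u, pw_append u]
      congr 1
      simp only [List.cons_append, List.nil_append, pw_cons]
      exact dema_idem i (pw v)
  | braid u v i j hij =>
      rw [List.append_assoc, List.append_assoc, pw_append u, pw_append u]
      congr 1
      simp only [List.cons_append, List.nil_append, pw_cons]
      exact dema_braid i j hij (pw v)
  | comm u v i j hij =>
      rw [List.append_assoc, List.append_assoc, pw_append u, pw_append u]
      congr 1
      simp only [List.cons_append, List.nil_append, pw_cons]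
      exact dema_comm i j (by omega) (pw v)

lemma pw_equiv {w w' : List (Fin (n - 1))} (h : HeckeEquiv n w w') : pw w = pw w' := by
  induction h with
  | rel _ _ h => exact pw_step h
  | refl _ => rfl
  | symm _ _ _ ih => exact ih.symm
  | trans _ _ _ _ _ ih1 ih2 => exact ih1.trans ih2

lemma heq_refl (w : List (Fin (n - 1))) : HeckeEquiv n w w := Relation.EqvGen.refl w

lemma heq_symm {w w' : List (Fin (n - 1))} (h : HeckeEquiv n w w') : HeckeEquiv n w' w :=
  Relation.EqvGen.symm _ _ h

lemma heq_trans {w₁ w₂ w₃ : List (Fin (n - 1))} (h1 : HeckeEquiv n w₁ w₂)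
    (h2 : HeckeEquiv n w₂ w₃) : HeckeEquiv n w₁ w₃ := Relation.EqvGen.trans _ _ _ h1 h2

lemma step_cons (i : Fin (n - 1)) {w w' : List (Fin (n - 1))} (h : HeckeStep n w w') :
    HeckeStep n (i :: w) (i :: w') := by
  cases h with
  | shorten u v j =>
      have := HeckeStep.shorten (n := n) (i :: u) v j
      simpa using this
  | braid u v j k hjk =>
      have := HeckeStep.braid (n := n) (i :: u) v j k hjk
      simpa using this
  | comm u v j k hjk =>
      have := HeckeStep.comm (n := n) (i :: u) v j k hjk
      simpa using this

lemma heq_cons (i : Fin (n - 1)) {w w' : List (Fin (n - 1))} (h : HeckeEquiv n w w') :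
    HeckeEquiv n (i :: w) (i :: w') := by
  induction h with
  | rel _ _ h => exact Relation.EqvGen.rel _ _ (step_cons i h)
  | refl _ => exact heq_refl _
  | symm _ _ _ ih => exact heq_symm ih
  | trans _ _ _ _ _ ih1 ih2 => exact heq_trans ih1 ih2

lemma eq_one_of_no_des (p : Equiv.Perm (Fin n)) (h : ∀ i : Fin (n - 1), ¬ Des i p) :
    p = 1 := by
  have adj : ∀ x y : Fin n, (y : ℕ) = (x : ℕ) + 1 → p⁻¹ x < p⁻¹ y := by
    intro x y hxy
    have hk' : (x : ℕ) < n - 1 := by have := y.2; omega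
    have hthis := (not_des_iff ⟨(x : ℕ), hk'⟩ p).mp (h ⟨(x : ℕ), hk'⟩)
    have hx : posA (⟨(x : ℕ), hk'⟩ : Fin (n - 1)) = x := Fin.ext rfl
    have hy : posB (⟨(x : ℕ), hk'⟩ : Fin (n - 1)) = y := Fin.ext (by simp [posB]; omega)
    rwa [hx, hy] at hthis
  have chain : ∀ d : ℕ, ∀ x y : Fin n, (y : ℕ) = (x : ℕ) + d + 1 → p⁻¹ x < p⁻¹ y := by
    intro d
    induction d with
    | zero => exact fun x y hy => adj x y (by omega)
    | succ d ih =>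
        intro x y hy
        have hz : (x : ℕ) + d + 1 < n := by have := y.2; omega
        exact (ih x ⟨(x : ℕ) + d + 1, hz⟩ rfl).trans (adj _ y (by simp; omega))
  have mono : StrictMono ⇑p⁻¹ := by
    intro x y hxy
    have hd : (y : ℕ) = (x : ℕ) + ((y : ℕ) - (x : ℕ) - 1) + 1 := by
      have : (x : ℕ) < (y : ℕ) := hxy
      omega
    exact chain _ x y hd
  have he : ∀ x, p⁻¹ x = x := by
    intro x
    have h1 : StrictMono.orderIsoOfSurjective ⇑p⁻¹ mono p⁻¹.surjective
        = OrderIso.refl (Fin n) := Subsingleton.elim _ _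
    have h2 := congrArg (fun e : Fin n ≃o Fin n => e x) h1
    simpa [StrictMono.coe_orderIsoOfSurjective] using h2
  have hinv : p⁻¹ = 1 := Equiv.ext he
  simpa using congrArg Inv.inv hinv

lemma des_len_pos {i : Fin (n - 1)} {p : Equiv.Perm (Fin n)} (h : Des i p) : 0 < len p := by
  rw [len, Finset.card_pos]
  refine ⟨(p⁻¹ (posB i), p⁻¹ (posA i)), ?_⟩
  simp only [invs, Finset.mem_filter, Finset.mem_univ, true_and]
  refine ⟨h, ?_⟩
  simp only [Equiv.Perm.coe_inv, Equiv.apply_symm_apply]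
  have : (posA i : Fin n).1 + 1 = (posB i).1 := rfl
  rw [Fin.lt_def]; omega

lemma exists_reduced : ∀ N : ℕ, ∀ p : Equiv.Perm (Fin n), len p = N →
    ∃ r : List (Fin (n - 1)), pw r = p ∧ r.length = N := by
  intro N
  induction N using Nat.strong_induction_on with
  | _ N ih =>
    intro p hp
    by_cases hdes : ∃ i : Fin (n - 1), Des i p
    · obtain ⟨i, hi⟩ := hdes
      have hlen : len (sw i * p) + 1 = N := by rw [len_mul_of_des i p hi, hp]
      have hpos : 0 < N := hp ▸ des_len_pos hi
      obtain ⟨r', hr1, hr2⟩ := ih (N - 1) (by omega) (sw i * p) (by omega)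
      refine ⟨i :: r', ?_, by simp [hr2]; omega⟩
      rw [pw_cons, hr1, dema_of_not_des, sw_mul_cancel]
      rw [des_sw_iff]
      exact not_not_intro hi
    · push_neg at hdes
      have hp1 : p = 1 := eq_one_of_no_des p hdes
      subst hp1
      refine ⟨[], by simp, ?_⟩
      rw [← hp, len_one]
      rfl

lemma sw_fixes {i j : Fin (n - 1)} (x : Fin n) (h1 : x ≠ posA j) (h2 : x ≠ posB j) :
    sw j x = x := Equiv.swap_apply_of_ne_of_ne h1 h2

lemma des_comm {i j : Fin (n - 1)} (hij : (i : ℕ) + 1 < (j : ℕ) ∨ (j : ℕ) + 1 < (i : ℕ))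
    (p : Equiv.Perm (Fin n)) : Des i (sw j * p) ↔ Des i p := by
  have hA : sw j (posA i) = posA i := by
    apply sw_fixes (i := i) <;> simp only [ne_eq, posA, posB, Fin.ext_iff] <;> omega
  have hB : sw j (posB i) = posB i := by
    apply sw_fixes (i := i) <;> simp only [ne_eq, posA, posB, Fin.ext_iff] <;> omega
  unfold Des
  rw [mul_inv_rev]
  simp only [Equiv.Perm.mul_apply]
  rw [show (sw j)⁻¹ = sw j from Equiv.swap_inv _ _, hA, hB]

lemma braid_des {i j : Fin (n - 1)} (hadj : (i : ℕ) + 1 = (j : ℕ) ∨ (j : ℕ) + 1 = (i : ℕ))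
    {p : Equiv.Perm (Fin n)} (hi : Des i p) (hj : Des j p) :
    Des j (sw i * p) ∧ Des i (sw j * (sw i * p)) := by
  have swi : (sw i : Equiv.Perm (Fin n))⁻¹ = sw i := Equiv.swap_inv _ _
  have swj : (sw j : Equiv.Perm (Fin n))⁻¹ = sw j := Equiv.swap_inv _ _
  rcases hadj with hij | hij
  · -- j = i + 1
    have hPA : (posA j : Fin n) = posB i := by simp [posA, posB, Fin.ext_iff]; omega
    have e1 : sw i (posB j) = posB j := by
      apply sw_fixes (i := j) <;> simp only [ne_eq, posA, posB, Fin.ext_iff] <;> omega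
    have e2 : sw i (posA j) = posA i := by rw [hPA]; exact Equiv.swap_apply_right _ _
    have e3 : sw j (posA i) = posA i := by
      apply sw_fixes (i := i) <;> simp only [ne_eq, posA, posB, Fin.ext_iff] <;> omega
    have e4 : sw j (posB i) = posB j := by rw [← hPA]; exact Equiv.swap_apply_left _ _
    have e5 : sw i (posA i) = posB i := Equiv.swap_apply_left _ _
    constructor
    · show (sw i * p)⁻¹ (posB j) < (sw i * p)⁻¹ (posA j)
      rw [mul_inv_rev]
      simp only [Equiv.Perm.mul_apply]
      rw [swi, e1, e2]
      have hj' : p⁻¹ (posB j) < p⁻¹ (posA j) := hj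
      rw [hPA] at hj'
      exact hj'.trans hi
    · show (sw j * (sw i * p))⁻¹ (posB i) < (sw j * (sw i * p))⁻¹ (posA i)
      rw [mul_inv_rev, mul_inv_rev]
      simp only [Equiv.Perm.mul_apply]
      rw [swi, swj, e4, e1, e3, e5]
      have hj' : p⁻¹ (posB j) < p⁻¹ (posA j) := hj
      rw [hPA] at hj'
      exact hj'
  · -- i = j + 1
    have hPA : (posA i : Fin n) = posB j := by simp [posA, posB, Fin.ext_iff]; omega
    have e1 : sw i (posA j) = posA j := by
      apply sw_fixes (i := j) <;> simp only [ne_eq, posA, posB, Fin.ext_iff] <;> omega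
    have e2 : sw i (posB j) = posB i := by rw [← hPA]; exact Equiv.swap_apply_left _ _
    have e3 : sw j (posB i) = posB i := by
      apply sw_fixes (i := i) <;> simp only [ne_eq, posA, posB, Fin.ext_iff] <;> omega
    have e4 : sw j (posA i) = posA j := by rw [hPA]; exact Equiv.swap_apply_right _ _
    have e5 : sw i (posB i) = posA i := Equiv.swap_apply_right _ _
    constructor
    · show (sw i * p)⁻¹ (posB j) < (sw i * p)⁻¹ (posA j)
      rw [mul_inv_rev]
      simp only [Equiv.Perm.mul_apply]
      rw [swi, e1, e2]
      have hi' : p⁻¹ (posB i) < p⁻¹ (posA i) := hi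
      rw [hPA] at hi'
      exact hi'.trans hj
    · show (sw j * (sw i * p))⁻¹ (posB i) < (sw j * (sw i * p))⁻¹ (posA i)
      rw [mul_inv_rev, mul_inv_rev]
      simp only [Equiv.Perm.mul_apply]
      rw [swi, swj, e3, e5, e4, e1, hPA]
      exact hj

lemma sw_braid_core {i j : Fin (n - 1)} (hij : (i : ℕ) + 1 = (j : ℕ)) :
    sw i * sw j * sw i = sw j * sw i * sw j := by
  have hPA : (posA j : Fin n) = posB i := by simp [posA, posB, Fin.ext_iff]; omega
  have e1 : sw i (posB j) = posB j := by
    apply sw_fixes (i := j) <;> simp only [ne_eq, posA, posB, Fin.ext_iff] <;> omega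
  have e2 : sw i (posA j) = posA i := by rw [hPA]; exact Equiv.swap_apply_right _ _
  have e3 : sw j (posA i) = posA i := by
    apply sw_fixes (i := i) <;> simp only [ne_eq, posA, posB, Fin.ext_iff] <;> omega
  have e4 : sw j (posB i) = posB j := by rw [← hPA]; exact Equiv.swap_apply_left _ _
  have h1 := Equiv.swap_apply_apply (sw i) (posA j) (posB j)
  have h2 := Equiv.swap_apply_apply (sw j) (posA i) (posB i)
  rw [e1, e2] at h1
  rw [e3, e4] at h2
  have swi : (sw i : Equiv.Perm (Fin n))⁻¹ = sw i := Equiv.swap_inv _ _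
  have swj : (sw j : Equiv.Perm (Fin n))⁻¹ = sw j := Equiv.swap_inv _ _
  rw [swi] at h1
  rw [swj] at h2
  exact h1.symm.trans h2

lemma sw_braid {i j : Fin (n - 1)}
    (hadj : (i : ℕ) + 1 = (j : ℕ) ∨ (j : ℕ) + 1 = (i : ℕ)) (p : Equiv.Perm (Fin n)) :
    sw i * (sw j * (sw i * p)) = sw j * (sw i * (sw j * p)) := by
  have hcore : sw i * sw j * sw i = sw j * sw i * sw j := by
    rcases hadj with h | h
    · exact sw_braid_core h
    · exact (sw_braid_core h).symm
  calc sw i * (sw j * (sw i * p)) = (sw i * sw j * sw i) * p := by group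
    _ = (sw j * sw i * sw j) * p := by rw [hcore]
    _ = sw j * (sw i * (sw j * p)) := by group

lemma reduced_cons {i : Fin (n - 1)} {u : List (Fin (n - 1))} {p : Equiv.Perm (Fin n)}
    (h1 : pw (i :: u) = p) (h2 : (i :: u).length = len p) :
    ¬ Des i (pw u) ∧ pw u = sw i * p ∧ u.length = len (sw i * p) ∧ Des i p := by
  have hle := len_pw_le u
  simp only [List.length_cons] at h2
  by_cases hd : Des i (pw u)
  · exfalso
    rw [pw_cons, len_dema_of_des i (pw u) hd] at h1
    rw [← h1] at h2
    omega
  · rw [pw_cons, dema_of_not_des i (pw u) hd] at h1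
    have hpu : pw u = sw i * p := by rw [← h1, sw_mul_cancel]
    have hlen2 : len p = len (pw u) + 1 := by rw [← h1, len_mul_of_not_des i (pw u) hd]
    have hulen : u.length = len (sw i * p) := by rw [← hpu]; omega
    have hdes : Des i p := by
      rw [← h1, des_sw_iff]
      exact hd
    exact ⟨hd, hpu, hulen, hdes⟩

lemma matsumoto : ∀ N : ℕ, ∀ p : Equiv.Perm (Fin n), len p = N →
    ∀ r r' : List (Fin (n - 1)), pw r = p → r.length = N → pw r' = p → r'.length = N →
    HeckeEquiv n r r' := by
  intro N
  induction N using Nat.strong_induction_on with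
  | _ N ih =>
    intro p hp r r' hr1 hr2 hr1' hr2'
    match r, r' with
    | [], [] => exact heq_refl []
    | [], (j :: v) => simp at hr2 hr2'; omega
    | (i :: u), [] => simp at hr2 hr2'; omega
    | (i :: u), (j :: v) =>
      obtain ⟨hdu, hpu, hul, hdi⟩ := reduced_cons hr1 (by rw [hp, hr2])
      obtain ⟨hdv, hpv, hvl, hdj⟩ := reduced_cons hr1' (by rw [hp, hr2'])
      have hN : u.length = N - 1 := by simp at hr2; omega
      have hN' : v.length = N - 1 := by simp at hr2'; omega
      have hNpos : 0 < N := by simp at hr2; omega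
      have hlip : len (sw i * p) = N - 1 := by rw [← hul, hN]
      have hljp : len (sw j * p) = N - 1 := by rw [← hvl, hN']
      rcases eq_or_ne i j with rfl | hne
      · -- same first letter
        have := ih (N - 1) (by omega) (sw i * p) hlip u v
          (by rw [hpu]) (by omega) (by rw [hpv]) (by omega)
        exact heq_cons i this
      · by_cases hadj : (i : ℕ) + 1 = (j : ℕ) ∨ (j : ℕ) + 1 = (i : ℕ)
        · -- braid case
          obtain ⟨hd1, hd2⟩ := braid_des hadj hdi hdj
          obtain ⟨hd1', hd2'⟩ := braid_des (Or.symm hadj) hdj hdi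
          have l2 : len (sw j * (sw i * p)) + 1 = N - 1 := by
            rw [len_mul_of_des j (sw i * p) hd1, hlip]
          have l2' : len (sw i * (sw j * p)) + 1 = N - 1 := by
            rw [len_mul_of_des i (sw j * p) hd1', hljp]
          have l3 : len (sw i * (sw j * (sw i * p))) + 1 = len (sw j * (sw i * p)) :=
            len_mul_of_des i _ hd2
          set q := sw i * (sw j * (sw i * p)) with hq
          have hq' : q = sw j * (sw i * (sw j * p)) := sw_braid hadj p
          have hNN : 3 ≤ N := by omega
          obtain ⟨d, hd_pw, hd_len⟩ := exists_reduced (len q) q rfl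
          have hlq : len q = N - 3 := by omega
          -- word e := j :: i :: d  is a reduced word of sw i * p
          have hid : pw (i :: d) = sw j * (sw i * p) := by
            rw [pw_cons, hd_pw, dema_of_not_des, hq, sw_mul_cancel]
            intro hdes
            have := (des_iff_len i q).mp hdes
            rw [hq, sw_mul_cancel, ← hq] at this
            omega
          have hjid : pw (j :: i :: d) = sw i * p := by
            rw [pw_cons, hid, dema_of_not_des, sw_mul_cancel]
            intro hdes
            have := (des_iff_len j (sw j * (sw i * p))).mp hdes
            rw [sw_mul_cancel] at this
            omega
          have hu_e : HeckeEquiv n u (j :: i :: d) :=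
            ih (N - 1) (by omega) (sw i * p) hlip u (j :: i :: d)
              (by rw [hpu]) (by omega) hjid (by simp [hd_len, hlq]; omega)
          -- word e' := i :: j :: d  is a reduced word of sw j * p
          have hjd : pw (j :: d) = sw i * (sw j * p) := by
            rw [pw_cons, hd_pw, dema_of_not_des, hq', sw_mul_cancel]
            intro hdes
            have := (des_iff_len j q).mp hdes
            rw [hq', sw_mul_cancel, ← hq'] at this
            omega
          have hijd : pw (i :: j :: d) = sw j * p := by
            rw [pw_cons, hjd, dema_of_not_des, sw_mul_cancel]
            intro hdes
            have := (des_iff_len i (sw i * (sw j * p))).mp hdes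
            rw [sw_mul_cancel] at this
            omega
          have hv_e : HeckeEquiv n v (i :: j :: d) :=
            ih (N - 1) (by omega) (sw j * p) hljp v (i :: j :: d)
              (by rw [hpv]) (by omega) hijd (by simp [hd_len, hlq]; omega)
          have hstep : HeckeStep n (i :: j :: i :: d) (j :: i :: j :: d) := by
            have := HeckeStep.braid (n := n) [] d i j hadj
            simpa using this
          refine heq_trans (heq_cons i hu_e) (heq_trans (Relation.EqvGen.rel _ _ hstep)
            (heq_symm (heq_cons j hv_e)))
        · -- commutation case
          have hne' : (i : ℕ) ≠ (j : ℕ) := fun h => hne (Fin.ext h)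
          push_neg at hadj
          have hfar : (i : ℕ) + 1 < (j : ℕ) ∨ (j : ℕ) + 1 < (i : ℕ) := by omega
          have hdij : Des i (sw j * p) := (des_comm hfar p).mpr hdi
          have hswc : sw i * sw j = sw j * sw i := by
            have h1 := Equiv.swap_apply_apply (sw i) (posA j) (posB j)
            have eA : sw i (posA j) = posA j := by
              apply sw_fixes (i := j) <;> simp only [ne_eq, posA, posB, Fin.ext_iff] <;> omega
            have eB : sw i (posB j) = posB j := by
              apply sw_fixes (i := j) <;> simp only [ne_eq, posA, posB, Fin.ext_iff] <;> omega
            rw [eA, eB, show (sw i : Equiv.Perm (Fin n))⁻¹ = sw i from Equiv.swap_inv _ _] at h1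
            have h2 : (sw j : Equiv.Perm (Fin n)) = sw i * sw j * sw i := h1
            conv_lhs => rw [h2]
            rw [← mul_assoc, ← mul_assoc, sw_mul_self, one_mul]
          set q := sw i * (sw j * p) with hq
          have hq' : q = sw j * (sw i * p) := by
            rw [hq, ← mul_assoc, hswc, mul_assoc]
          have l2 : len q + 1 = N - 1 := by
            rw [hq, len_mul_of_des i (sw j * p) hdij, hljp]
          have hNN : 2 ≤ N := by omega
          obtain ⟨d, hd_pw, hd_len⟩ := exists_reduced (len q) q rfl
          have hlq : len q = N - 2 := by omega
          have hjd : pw (j :: d) = sw i * p := by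
            rw [pw_cons, hd_pw, dema_of_not_des, hq', sw_mul_cancel]
            intro hdes
            have := (des_iff_len j q).mp hdes
            rw [hq', sw_mul_cancel, ← hq'] at this
            omega
          have hid : pw (i :: d) = sw j * p := by
            rw [pw_cons, hd_pw, dema_of_not_des, hq, sw_mul_cancel]
            intro hdes
            have := (des_iff_len i q).mp hdes
            rw [hq, sw_mul_cancel, ← hq] at this
            omega
          have hu_e : HeckeEquiv n u (j :: d) :=
            ih (N - 1) (by omega) (sw i * p) hlip u (j :: d)
              (by rw [hpu]) (by omega) hjd (by simp [hd_len, hlq]; omega)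
          have hv_e : HeckeEquiv n v (i :: d) :=
            ih (N - 1) (by omega) (sw j * p) hljp v (i :: d)
              (by rw [hpv]) (by omega) hid (by simp [hd_len, hlq]; omega)
          have hstep : HeckeStep n (i :: j :: d) (j :: i :: d) := by
            have := HeckeStep.comm (n := n) [] d i j hfar
            simpa using this
          refine heq_trans (heq_cons i hu_e) (heq_trans (Relation.EqvGen.rel _ _ hstep)
            (heq_symm (heq_cons j hv_e)))

lemma equiv_reduced (w : List (Fin (n - 1))) :
    ∃ r : List (Fin (n - 1)), HeckeEquiv n w r ∧ pw r = pw w ∧ r.length = len (pw w) := by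
  induction w with
  | nil => exact ⟨[], heq_refl [], rfl, by simp⟩
  | cons i u ihu =>
    obtain ⟨r, hur, hr_pw, hr_len⟩ := ihu
    by_cases hd : Des i (pw u)
    · -- absorbing case : pw (i :: u) = pw u
      have hiu : pw (i :: u) = pw u := by rw [pw_cons, len_dema_of_des i (pw u) hd]
      have hdr : Des i (pw r) := by rw [hr_pw]; exact hd
      have hlen1 : len (sw i * pw u) + 1 = len (pw u) := len_mul_of_des i (pw u) hd
      obtain ⟨d, hd_pw, hd_len⟩ := exists_reduced (len (sw i * pw u)) (sw i * pw u) rfl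
      have hid : pw (i :: d) = pw u := by
        rw [pw_cons, hd_pw, dema_of_not_des, sw_mul_cancel]
        rw [des_sw_iff]
        exact not_not_intro hd
      have hmt : HeckeEquiv n r (i :: d) :=
        matsumoto (len (pw u)) (pw u) rfl r (i :: d) hr_pw hr_len hid (by simp [hd_len]; omega)
      -- i :: i :: d  ~  i :: d  by the shortening move
      have hstep : HeckeStep n (i :: i :: d) (i :: d) := by
        have := HeckeStep.shorten (n := n) [] d i
        simpa using this
      have hchain : HeckeEquiv n (i :: u) r :=
        heq_trans (heq_cons i hur)
          (heq_trans (heq_cons i hmt)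
            (heq_trans (Relation.EqvGen.rel _ _ hstep) (heq_symm hmt)))
      exact ⟨r, hchain, by rw [hr_pw, hiu], by rw [hr_len, hiu]⟩
    · have hiu : pw (i :: u) = sw i * pw u := by
        rw [pw_cons, dema_of_not_des i (pw u) hd]
      refine ⟨i :: r, heq_cons i hur, ?_, ?_⟩
      · rw [pw_cons, hr_pw, ← pw_cons]
      · rw [hiu, len_mul_of_not_des i (pw u) hd]
        simp [hr_len]

lemma heckeLen_eq (w : List (Fin (n - 1))) : heckeLen n w = len (pw w) := by
  obtain ⟨r, hwr, hr_pw, hr_len⟩ := equiv_reduced w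
  have hmem : len (pw w) ∈ {k | ∃ w', HeckeEquiv n w w' ∧ w'.length = k} :=
    ⟨r, hwr, hr_len⟩
  apply le_antisymm
  · exact Nat.sInf_le hmem
  · apply le_csInf ⟨_, hmem⟩
    rintro k ⟨w', hww', hw'len⟩
    have : pw w' = pw w := (pw_equiv hww').symm
    calc len (pw w) = len (pw w') := by rw [this]
      _ ≤ w'.length := len_pw_le w'
      _ = k := hw'len

lemma cons_absorb {t : Fin (n - 1)} {w : List (Fin (n - 1))} (h : Des t (pw w)) :
    HeckeEquiv n (t :: w) w := by
  obtain ⟨r, hwr, hr_pw, hr_len⟩ := equiv_reduced w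
  have hdr : Des t (pw r) := by rw [hr_pw]; exact h
  have hlen1 : len (sw t * pw w) + 1 = len (pw w) := len_mul_of_des t (pw w) h
  obtain ⟨d, hd_pw, hd_len⟩ := exists_reduced (len (sw t * pw w)) (sw t * pw w) rfl
  have hid : pw (t :: d) = pw w := by
    rw [pw_cons, hd_pw, dema_of_not_des, sw_mul_cancel]
    rw [des_sw_iff]
    exact not_not_intro h
  have hmt : HeckeEquiv n r (t :: d) :=
    matsumoto (len (pw w)) (pw w) rfl r (t :: d) hr_pw hr_len hid (by simp [hd_len]; omega)
  have hstep : HeckeStep n (t :: t :: d) (t :: d) := by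
    have := HeckeStep.shorten (n := n) [] d t
    simpa using this
  exact heq_trans (heq_cons t hwr)
    (heq_trans (heq_cons t hmt)
      (heq_trans (Relation.EqvGen.rel _ _ hstep)
        (heq_trans (heq_symm hmt) (heq_symm hwr))))

end HeckeAux

open HeckeAux in
/-- Exchange-type property for the 0-Hecke monoid `H_n`: for any element `m` (given by
a word `w`) and any generator `t`, exactly one of the following holds:
`ℓ(t·m) = ℓ(m) + 1`, or `t·m = m`. -/
theorem hecke_exchange (n : ℕ) (w : List (Fin (n - 1))) (t : Fin (n - 1)) :
    Xor' (heckeLen n (t :: w) = heckeLen n w + 1) (HeckeEquiv n (t :: w) w) := by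
  by_cases h : Des t (pw w)
  · right
    refine ⟨cons_absorb h, ?_⟩
    rw [heckeLen_eq, heckeLen_eq, pw_cons, len_dema_of_des t (pw w) h]
    omega
  · left
    constructor
    · rw [heckeLen_eq, heckeLen_eq, pw_cons, dema_of_not_des t (pw w) h,
        len_mul_of_not_des t (pw w) h]
    · intro heqv
      have := pw_equiv heqv
      rw [pw_cons, dema_of_not_des t (pw w) h] at this
      have hl := len_mul_of_not_des t (pw w) h
      rw [this] at hl
      omega
end
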